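/- arXiv:2212.06946 — 4 statements merged into one kernel-verified Lean document; each statement's English description precedes it below -/
import Mathlib

section
/- Let n be a natural number and let x denote the image of X in the quotient ring ℤ[X]/(X^{n+1}). Then the family of elements (1+x)^k, for k = 0, 1, …, n, is a basis of ℤ[X]/(X^{n+1}) regarded as a module over ℤ (the shifted Atiyah–Todd basis). -/
open Polynomial

/-- Auxiliary: transform a power basis `x^i` into the shifted basis `(1+x)^k`
via the unitriangular binomial-coefficient matrix. -/
theorem shifted_basis_of_power_basis (n : ℕ) (R : Type) [CommRing R]
    (b : Module.Basis (Fin (n+1)) ℤ R) (x : R)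
    (hb : ∀ i : Fin (n+1), b i = x ^ (i : ℕ)) :
    ∃ b' : Module.Basis (Fin (n + 1)) ℤ R, ∀ k : Fin (n + 1), b' k = (1 + x) ^ (k : ℕ) := by
  classical
  set M : Matrix (Fin (n+1)) (Fin (n+1)) ℤ := Matrix.of fun i j => ((j:ℕ).choose i : ℤ) with hM
  have htri : M.BlockTriangular id := by
    intro i j hij
    simp only [hM, Matrix.of_apply]
    exact_mod_cast congrArg (Nat.cast : ℕ → ℤ) (Nat.choose_eq_zero_of_lt hij)
  have hdet : M.det = 1 := by
    rw [Matrix.det_of_upperTriangular htri]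
    simp [hM]
  have hunit : IsUnit (LinearMap.toMatrix b b (Matrix.toLin b b M)).det := by
    rw [LinearMap.toMatrix_toLin, hdet]; exact isUnit_one
  let e : R ≃ₗ[ℤ] R := LinearEquiv.ofIsUnitDet hunit
  refine ⟨b.map e, fun k => ?_⟩
  have h1 : (b.map e) k = Matrix.toLin b b M (b k) := by
    simp [e, Module.Basis.map_apply, LinearEquiv.coe_ofIsUnitDet]
  rw [h1, Matrix.toLin_self]
  have h2 : ∀ i : Fin (n+1), M i k • b i = ((k:ℕ).choose i : ℤ) • x ^ (i:ℕ) := by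
    intro i; rw [hb, hM]; rfl
  rw [Finset.sum_congr rfl fun i _ => h2 i]
  have hpow : ((1:R) + x) ^ (k:ℕ)
      = ∑ m ∈ Finset.range ((k:ℕ)+1), x ^ m * ((k:ℕ).choose m : R) := by
    rw [add_comm]; exact (add_pow x 1 (k:ℕ)).trans (by simp)
  have hext : ∑ m ∈ Finset.range ((k:ℕ)+1), x ^ m * ((k:ℕ).choose m : R)
      = ∑ m ∈ Finset.range (n+1), x ^ m * ((k:ℕ).choose m : R) := by
    apply Finset.sum_subset
    · intro m hm
      simp only [Finset.mem_range] at hm ⊢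
      have := k.isLt; omega
    · intro m _ hm
      simp only [Finset.mem_range, not_lt] at hm
      rw [Nat.choose_eq_zero_of_lt (by omega)]
      simp
  rw [hpow, hext, ← Fin.sum_univ_eq_sum_range (fun m => x ^ m * ((k:ℕ).choose m : R)) (n+1)]
  refine Finset.sum_congr rfl fun i _ => ?_
  rw [zsmul_eq_mul, mul_comm]
  push_cast
  ring

/-- **The shifted Atiyah–Todd basis.**
Let `x` be the image of `X` in `R := ℤ[X]/(X^(n+1))`.  Then the family
`(1+x)^k`, `k = 0, 1, …, n`, is a basis of `R` as a `ℤ`-module. -/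
theorem shifted_atiyah_todd_basis (n : ℕ) :
    let R := ℤ[X] ⧸ Ideal.span {(X : ℤ[X]) ^ (n + 1)}
    let x : R := Ideal.Quotient.mk (Ideal.span {(X : ℤ[X]) ^ (n + 1)}) X
    ∃ b : Module.Basis (Fin (n + 1)) ℤ R, ∀ k : Fin (n + 1), b k = (1 + x) ^ (k : ℕ) := by
  intro R x
  have hm : (X ^ (n+1) : ℤ[X]).Monic := monic_X_pow _
  have hdeg : (X ^ (n+1) : ℤ[X]).natDegree = n + 1 := natDegree_X_pow _
  let pb : PowerBasis ℤ (AdjoinRoot ((X:ℤ[X])^(n+1))) := AdjoinRoot.powerBasis' hm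
  have hdim : pb.dim = n + 1 := by simpa [pb] using hdeg
  let b0 : Module.Basis (Fin pb.dim) ℤ R := pb.basis
  have hb0 : ∀ i : Fin pb.dim, b0 i = x ^ (i : ℕ) := fun i => pb.basis_eq_pow i
  let b : Module.Basis (Fin (n+1)) ℤ R := b0.reindex (finCongr hdim)
  have hb : ∀ i : Fin (n+1), b i = x ^ (i : ℕ) := by
    intro i
    rw [show b i = b0 ((finCongr hdim).symm i) from Module.Basis.reindex_apply .., hb0]
    simp
  exact shifted_basis_of_power_basis n R b x hb
end

section
/- Let k be a field, H and H' Hopf algebras over k, χ : H → H' a bialgebra homomorphism, A a right H-comodule algebra with coaction ρ_A(a) = a₍₀₎ ⊗ a₍₁₎, A' a right H'-comodule algebra with coaction ρ_{A'}, α : A → A' a unital algebra homomorphism satisfying ρ_{A'} ∘ α = (α ⊗ χ) ∘ ρ_A, and M' a relative (A', H')-Hopf module. Then: (i) for every ξ = ∑ m'_i ⊗ h_i ∈ M' □^{H'} H and every a ∈ A, the element ξ·a := ∑ m'_i α(a₍₀₎) ⊗ h_i a₍₁₎ again lies in M' □^{H'} H; (ii) this formula defines a right A-module structure on M' □^{H'}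 H; (iii) the map id_{M'} ⊗ Δ_H restricts to a right H-comodule structure on M' □^{H'} H (with values in (M' □^{H'} H) ⊗ H), and together with the A-action of (ii) it makes M' □^{H'} H a relative (A, H)-Hopf module. -/
open TensorProduct LinearMap

set_option maxHeartbeats 2000000
set_option synthInstance.maxHeartbeats 400000

/-- **The cotensor product `M' □^{H'} H` is a relative `(A, H)`-Hopf module.**
Let `χ : H → H'` be a bialgebra homomorphism of Hopf algebras over a field `k`,
`A` a right `H`-comodule algebra, `A'` a right `H'`-comodule algebra,
`α : A → A'` an algebra map with `ρ_{A'} ∘ α = (α ⊗ χ) ∘ ρ_A`, and `M'` a relative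
`(A', H')`-Hopf module.  Then:
(i) the formula `ξ · a = ∑ m'ᵢ α(a₍₀₎) ⊗ hᵢ a₍₁₎` maps the cotensor product
`M' □^{H'} H ⊆ M' ⊗ H` to itself; (ii) it defines a right `A`-module structure;
(iii) `id ⊗ Δ_H` restricts to a right `H`-comodule structure on `M' □^{H'} H` which
together with the `A`-action makes it a relative `(A, H)`-Hopf module. -/
theorem cotensor_relative_hopf_module
    (k H H' A A' M' : Type*) [Field k] [Ring H] [Ring H']
    [HopfAlgebra k H] [HopfAlgebra k H']
    [Ring A] [Algebra k A] [Ring A'] [Algebra k A']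
    [AddCommGroup M'] [Module k M']
    (χ : H →ₐc[k] H')
    -- `A` is a right `H`-comodule algebra
    (ρA : A →ₐ[k] A ⊗[k] H)
    (hρA_coassoc : (LinearMap.rTensor H ρA.toLinearMap) ∘ₗ ρA.toLinearMap =
      (TensorProduct.assoc k A H H).symm.toLinearMap ∘ₗ
        (LinearMap.lTensor A Coalgebra.comul) ∘ₗ ρA.toLinearMap)
    (hρA_counit : (TensorProduct.rid k A).toLinearMap ∘ₗ
      (LinearMap.lTensor A Coalgebra.counit) ∘ₗ ρA.toLinearMap = LinearMap.id)
    -- `A'` is a right `H'`-comodule algebra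
    (ρA' : A' →ₐ[k] A' ⊗[k] H')
    (hρA'_coassoc : (LinearMap.rTensor H' ρA'.toLinearMap) ∘ₗ ρA'.toLinearMap =
      (TensorProduct.assoc k A' H' H').symm.toLinearMap ∘ₗ
        (LinearMap.lTensor A' Coalgebra.comul) ∘ₗ ρA'.toLinearMap)
    (hρA'_counit : (TensorProduct.rid k A').toLinearMap ∘ₗ
      (LinearMap.lTensor A' Coalgebra.counit) ∘ₗ ρA'.toLinearMap = LinearMap.id)
    -- `α : A → A'` intertwines the coactions along `χ`
    (α : A →ₐ[k] A')
    (hα : ρA'.toLinearMap ∘ₗ α.toLinearMap =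
      (TensorProduct.map α.toLinearMap (χ : H →ₗ[k] H')) ∘ₗ ρA.toLinearMap)
    -- `M'` is a right `A'`-module: `actM' a' m' = m' · a'`
    (actM' : A' →ₗ[k] M' →ₗ[k] M')
    (hactM'_one : actM' 1 = LinearMap.id)
    (hactM'_mul : ∀ a' b' : A', actM' (a' * b') = actM' b' ∘ₗ actM' a')
    -- `M'` is a right `H'`-comodule
    (ρM' : M' →ₗ[k] M' ⊗[k] H')
    (hρM'_coassoc : (LinearMap.rTensor H' ρM') ∘ₗ ρM' =
      (TensorProduct.assoc k M' H' H').symm.toLinearMap ∘ₗ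
        (LinearMap.lTensor M' Coalgebra.comul) ∘ₗ ρM')
    (hρM'_counit : (TensorProduct.rid k M').toLinearMap ∘ₗ
      (LinearMap.lTensor M' Coalgebra.counit) ∘ₗ ρM' = LinearMap.id)
    -- `M'` is a relative `(A', H')`-Hopf module
    (hopfM' : ∀ a' : A', ρM' ∘ₗ actM' a' =
      (TensorProduct.lift
          (((TensorProduct.mapBilinear (RingHom.id k) M' H' M' H').comp actM').compl₂
            ((LinearMap.mul k H').flip)) (ρA' a')) ∘ₗ ρM') :
    -- the cotensor product `M' □^{H'} H` as a subspace of `M' ⊗ H`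
    let cot : Submodule k (M' ⊗[k] H) := LinearMap.ker
      ((LinearMap.rTensor H ρM') -
        ((TensorProduct.assoc k M' H' H).symm.toLinearMap ∘ₗ
          (LinearMap.lTensor M'
            ((LinearMap.rTensor H (χ : H →ₗ[k] H')) ∘ₗ Coalgebra.comul))))
    -- the componentwise action of `A' ⊗ H` on `M' ⊗ H`
    let smH : A' ⊗[k] H →ₗ[k] (M' ⊗[k] H) →ₗ[k] (M' ⊗[k] H) :=
      TensorProduct.lift
        (((TensorProduct.mapBilinear (RingHom.id k) M' H M' H).comp actM').compl₂
          ((LinearMap.mul k H).flip))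
    -- the right `A`-action `ξ · a = ∑ m'ᵢ α(a₍₀₎) ⊗ hᵢ a₍₁₎` on `M' ⊗ H`
    let actA : A →ₗ[k] (M' ⊗[k] H) →ₗ[k] (M' ⊗[k] H) :=
      smH ∘ₗ (TensorProduct.map α.toLinearMap LinearMap.id) ∘ₗ ρA.toLinearMap
    -- the coaction `id_{M'} ⊗ Δ_H` on `M' ⊗ H`
    let δ : M' ⊗[k] H →ₗ[k] (M' ⊗[k] H) ⊗[k] H :=
      (TensorProduct.assoc k M' H H).symm.toLinearMap ∘ₗ
        (LinearMap.lTensor M' Coalgebra.comul)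
    -- the componentwise action of `A ⊗ H` on `(M' ⊗ H) ⊗ H`
    let smMH : A ⊗[k] H →ₗ[k] ((M' ⊗[k] H) ⊗[k] H) →ₗ[k] ((M' ⊗[k] H) ⊗[k] H) :=
      TensorProduct.lift
        (((TensorProduct.mapBilinear (RingHom.id k) (M' ⊗[k] H) H (M' ⊗[k] H) H).comp actA).compl₂
          ((LinearMap.mul k H).flip))
    -- (i) the action preserves the cotensor product
    (∀ a : A, ∀ ξ ∈ cot, actA a ξ ∈ cot) ∧
    -- (ii) it is a right `A`-module structure
    (actA 1 = LinearMap.id) ∧ (∀ a b : A, actA (a * b) = actA b ∘ₗ actA a) ∧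
    -- (iii) the coaction `id ⊗ Δ_H` restricts to the cotensor product …
    (∀ ξ ∈ cot, δ ξ ∈ LinearMap.range (LinearMap.rTensor H cot.subtype)) ∧
    -- … it is coassociative and counital …
    ((LinearMap.rTensor H δ) ∘ₗ δ =
        (TensorProduct.assoc k (M' ⊗[k] H) H H).symm.toLinearMap ∘ₗ
          (LinearMap.lTensor (M' ⊗[k] H) Coalgebra.comul) ∘ₗ δ) ∧
    ((TensorProduct.rid k (M' ⊗[k] H)).toLinearMap ∘ₗ
        (LinearMap.lTensor (M' ⊗[k] H) Coalgebra.counit) ∘ₗ δ = LinearMap.id) ∧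
    -- … and together with the `A`-action it satisfies the Hopf-module compatibility
    (∀ a : A, δ ∘ₗ actA a = (smMH (ρA a)) ∘ₗ δ) := by
  intro cot smH actA δ smMH
  -- abbreviations
  set χL : H →ₗ[k] H' := (χ : H →ₗ[k] H') with hχL
  set αL : A →ₗ[k] A' := α.toLinearMap with hαL
  set Δ : H →ₗ[k] H ⊗[k] H := (Coalgebra.comul : H →ₗ[k] H ⊗[k] H) with hΔ
  set sm' : A' ⊗[k] H' →ₗ[k] M' ⊗[k] H' →ₗ[k] M' ⊗[k] H' :=
    TensorProduct.lift (((TensorProduct.mapBilinear (RingHom.id k) M' H' M' H').comp actM').compl₂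
      ((LinearMap.mul k H').flip)) with hsm'def
  set F : M' ⊗[k] H →ₗ[k] (M' ⊗[k] H') ⊗[k] H := LinearMap.rTensor H ρM' with hF
  set G : M' ⊗[k] H →ₗ[k] (M' ⊗[k] H') ⊗[k] H :=
    (TensorProduct.assoc k M' H' H).symm.toLinearMap ∘ₗ
      (LinearMap.lTensor M' ((LinearMap.rTensor H χL) ∘ₗ Δ)) with hG
  -- pure-tensor formulas
  have hsmH : ∀ (a' : A') (h : H) (m : M') (g : H),
      smH (a' ⊗ₜ[k] h) (m ⊗ₜ[k] g) = actM' a' m ⊗ₜ[k] (g * h) := by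
    intro a' h m g
    simp [smH, TensorProduct.lift.tmul, LinearMap.compl₂_apply,
      TensorProduct.mapBilinear_apply, LinearMap.mul_apply', LinearMap.flip_apply]
  have hsm' : ∀ (a' : A') (u : H') (n : M') (v : H'),
      sm' (a' ⊗ₜ[k] u) (n ⊗ₜ[k] v) = actM' a' n ⊗ₜ[k] (v * u) := by
    intro a' u n v
    simp [hsm'def, TensorProduct.lift.tmul, LinearMap.compl₂_apply,
      TensorProduct.mapBilinear_apply, LinearMap.mul_apply', LinearMap.flip_apply]
  set sm3 : (A' ⊗[k] H') ⊗[k] H →ₗ[k]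
      (M' ⊗[k] H') ⊗[k] H →ₗ[k] (M' ⊗[k] H') ⊗[k] H :=
    TensorProduct.lift (((TensorProduct.mapBilinear (RingHom.id k) (M' ⊗[k] H') H (M' ⊗[k] H') H).comp
      sm').compl₂ ((LinearMap.mul k H).flip)) with hsm3def
  have hsm3 : ∀ (w : A' ⊗[k] H') (h : H) (t : M' ⊗[k] H') (g : H),
      sm3 (w ⊗ₜ[k] h) (t ⊗ₜ[k] g) = sm' w t ⊗ₜ[k] (g * h) := by
    intro w h t g
    simp [hsm3def, TensorProduct.lift.tmul, LinearMap.compl₂_apply,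
      TensorProduct.mapBilinear_apply, LinearMap.mul_apply', LinearMap.flip_apply]
  have hsmMH : ∀ (a : A) (u : H) (t : M' ⊗[k] H) (g : H),
      smMH (a ⊗ₜ[k] u) (t ⊗ₜ[k] g) = actA a t ⊗ₜ[k] (g * u) := by
    intro a u t g
    simp [smMH, TensorProduct.lift.tmul, LinearMap.compl₂_apply,
      TensorProduct.mapBilinear_apply, LinearMap.mul_apply', LinearMap.flip_apply]
  -- elementwise forms of hypotheses
  have hopfE : ∀ (a' : A') (m : M'), ρM' (actM' a' m) = sm' (ρA' a') (ρM' m) := by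
    intro a' m
    simpa using LinearMap.congr_fun (hopfM' a') m
  have hαE : ∀ a : A, ρA' (α a) = TensorProduct.map αL χL (ρA a) := by
    intro a
    exact LinearMap.congr_fun hα a
  have hE : ∀ a : A, LinearMap.rTensor H ρA.toLinearMap (ρA a) =
      (TensorProduct.assoc k A H H).symm (LinearMap.lTensor A Δ (ρA a)) := by
    intro a
    simpa using LinearMap.congr_fun hρA_coassoc a
  have hmem : ∀ ξ : M' ⊗[k] H, ξ ∈ cot ↔ F ξ - G ξ = 0 := by
    intro ξ
    simp only [cot, LinearMap.mem_ker, LinearMap.sub_apply]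
    exact Iff.rfl
  -- membership criterion done; now the module structure
  have hactA : ∀ (a : A) (ξ : M' ⊗[k] H),
      actA a ξ = smH (TensorProduct.map αL LinearMap.id (ρA a)) ξ := by
    intro a ξ
    simp [actA]
    rfl
  have hone : actA 1 = LinearMap.id := by
    apply TensorProduct.ext'
    intro m g
    rw [hactA]
    simp [Algebra.TensorProduct.one_def, hsmH, hαL, hactM'_one]
  have hsmH_mul : ∀ (x y : A' ⊗[k] H) (ξ : M' ⊗[k] H),
      smH (x * y) ξ = smH y (smH x ξ) := by
    intro x
    induction x using TensorProduct.induction_on with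
    | zero => intro y ξ; simp
    | tmul a h =>
      intro y
      induction y using TensorProduct.induction_on with
      | zero => intro ξ; simp
      | tmul b l =>
        intro ξ
        induction ξ using TensorProduct.induction_on with
        | zero => simp
        | tmul m g =>
          rw [Algebra.TensorProduct.tmul_mul_tmul, hsmH, hsmH, hsmH, hactM'_mul]
          simp [mul_assoc]
        | add ξ₁ ξ₂ ih1 ih2 => simp only [map_add, ih1, ih2]
      | add y₁ y₂ ih1 ih2 =>
        intro ξ; simp only [mul_add, map_add, LinearMap.add_apply, ih1, ih2]
    | add x₁ x₂ ih1 ih2 =>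
      intro y ξ; simp only [add_mul, map_add, LinearMap.add_apply, ih1, ih2]
  have hmapmul : ∀ x y : A ⊗[k] H, TensorProduct.map αL LinearMap.id (x * y) =
      TensorProduct.map αL LinearMap.id x * TensorProduct.map αL LinearMap.id y := by
    intro x
    induction x using TensorProduct.induction_on with
    | zero => intro y; simp
    | tmul a h =>
      intro y
      induction y using TensorProduct.induction_on with
      | zero => simp
      | tmul b l =>
        simp [Algebra.TensorProduct.tmul_mul_tmul, hαL, AlgHom.toLinearMap_apply, map_mul]
      | add y₁ y₂ ih1 ih2 => simp only [mul_add, map_add, ih1, ih2]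
    | add x₁ x₂ ih1 ih2 => intro y; simp only [add_mul, map_add, ih1, ih2]
  have hmul : ∀ a b : A, actA (a * b) = actA b ∘ₗ actA a := by
    intro a b
    apply LinearMap.ext
    intro ξ
    show actA (a * b) ξ = actA b (actA a ξ)
    rw [hactA, map_mul, hmapmul, hsmH_mul, ← hactA, ← hactA]
  -- more elementwise helpers
  have hχmul : ∀ x y : H, χL (x * y) = χL x * χL y := by
    intro x y
    simp [hχL]
  have hΔmul : ∀ x y : H, Δ (x * y) = Δ x * Δ y := by
    intro x y
    simp [hΔ]
  have eδ : ∀ (m : M') (g : H),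
      δ (m ⊗ₜ[k] g) = (TensorProduct.assoc k M' H H).symm (m ⊗ₜ[k] Δ g) := by
    intro m g
    simp [δ, hΔ]
  have hco : ∀ g : H, LinearMap.rTensor H Δ (Δ g) =
      (TensorProduct.assoc k H H H).symm (LinearMap.lTensor H Δ (Δ g)) := by
    intro g
    rw [hΔ]
    exact (Coalgebra.coassoc_symm_apply g).symm
  -- (i) the action preserves the cotensor product
  have hL1 : ∀ (c : A ⊗[k] H) (ξ : M' ⊗[k] H),
      F (smH (TensorProduct.map αL LinearMap.id c) ξ) =
        sm3 (TensorProduct.map (TensorProduct.map αL χL) LinearMap.id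
          (LinearMap.rTensor H ρA.toLinearMap c)) (F ξ) := by
    intro c
    induction c using TensorProduct.induction_on with
    | zero => intro ξ; simp only [map_zero, LinearMap.zero_apply, TensorProduct.tmul_zero,
          TensorProduct.zero_tmul, zero_mul, mul_zero]
    | tmul a h =>
      intro ξ
      induction ξ using TensorProduct.induction_on with
      | zero => simp only [map_zero, LinearMap.zero_apply, TensorProduct.tmul_zero,
          TensorProduct.zero_tmul, zero_mul, mul_zero]
      | tmul m g =>
        simp only [TensorProduct.map_tmul, LinearMap.id_coe, id_eq,
          LinearMap.rTensor_tmul, hαL, AlgHom.toLinearMap_apply, hsmH, hF, hsm3,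
          hopfE, hαE]
      | add ξ₁ ξ₂ ih1 ih2 => simp only [map_add, ih1, ih2]
    | add c₁ c₂ ih1 ih2 =>
      intro ξ; simp only [map_add, LinearMap.add_apply, ih1, ih2]
  have key2 : ∀ (a : A) (m : M') (d e : H ⊗[k] H),
      (TensorProduct.assoc k M' H' H).symm
          (actM' (αL a) m ⊗ₜ[k] (LinearMap.rTensor H χL (e * d))) =
        sm3 (TensorProduct.map (TensorProduct.map αL χL) LinearMap.id
            ((TensorProduct.assoc k A H H).symm (a ⊗ₜ[k] d)))
          ((TensorProduct.assoc k M' H' H).symm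
            (m ⊗ₜ[k] (LinearMap.rTensor H χL e))) := by
    intro a m d
    induction d using TensorProduct.induction_on with
    | zero => intro e; simp only [map_zero, LinearMap.zero_apply, TensorProduct.tmul_zero,
          TensorProduct.zero_tmul, zero_mul, mul_zero]
    | tmul d₁ d₂ =>
      intro e
      induction e using TensorProduct.induction_on with
      | zero => simp only [map_zero, LinearMap.zero_apply, TensorProduct.tmul_zero,
          TensorProduct.zero_tmul, zero_mul, mul_zero]
      | tmul e₁ e₂ =>
        simp only [Algebra.TensorProduct.tmul_mul_tmul, LinearMap.rTensor_tmul,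
          hχmul, TensorProduct.assoc_symm_tmul, TensorProduct.map_tmul,
          LinearMap.id_coe, id_eq, hsm3, hsm']
      | add e₁ e₂ ih1 ih2 =>
        simp only [add_mul, map_add, TensorProduct.tmul_add, ih1, ih2]
    | add d₁ d₂ ih1 ih2 =>
      intro e
      simp only [mul_add, map_add, TensorProduct.tmul_add, LinearMap.add_apply,
        ih1 e, ih2 e]
  have hL2 : ∀ (c : A ⊗[k] H) (ξ : M' ⊗[k] H),
      G (smH (TensorProduct.map αL LinearMap.id c) ξ) =
        sm3 (TensorProduct.map (TensorProduct.map αL χL) LinearMap.id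
          ((TensorProduct.assoc k A H H).symm (LinearMap.lTensor A Δ c))) (G ξ) := by
    intro c
    induction c using TensorProduct.induction_on with
    | zero => intro ξ; simp only [map_zero, LinearMap.zero_apply, TensorProduct.tmul_zero,
          TensorProduct.zero_tmul, zero_mul, mul_zero]
    | tmul a u =>
      intro ξ
      induction ξ using TensorProduct.induction_on with
      | zero => simp only [map_zero, LinearMap.zero_apply, TensorProduct.tmul_zero,
          TensorProduct.zero_tmul, zero_mul, mul_zero]
      | tmul m g =>
        simp only [TensorProduct.map_tmul, LinearMap.id_coe, id_eq, hsmH]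
        simp only [hG, LinearMap.comp_apply, LinearEquiv.coe_coe,
          LinearMap.lTensor_tmul, hΔmul]
        exact key2 a m (Δ u) (Δ g)
      | add ξ₁ ξ₂ ih1 ih2 => simp only [map_add, ih1, ih2]
    | add c₁ c₂ ih1 ih2 =>
      intro ξ; simp only [map_add, LinearMap.add_apply, ih1, ih2]
  have hC1 : ∀ a : A, ∀ ξ ∈ cot, actA a ξ ∈ cot := by
    intro a ξ hξ
    rw [hmem] at hξ ⊢
    rw [hactA, hL1, hL2, hE, ← map_sub, hξ, map_zero]
  -- (iii) the coaction restricts to the cotensor product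
  set ΘL : (M' ⊗[k] H') ⊗[k] H →ₗ[k] ((M' ⊗[k] H') ⊗[k] H) ⊗[k] H :=
    (TensorProduct.assoc k (M' ⊗[k] H') H H).symm.toLinearMap ∘ₗ
      LinearMap.lTensor (M' ⊗[k] H') Δ with hΘL
  have hN1 : ∀ ξ : M' ⊗[k] H, LinearMap.rTensor H F (δ ξ) = ΘL (F ξ) := by
    have hN1' : ∀ (m : M') (e : H ⊗[k] H),
        LinearMap.rTensor H F ((TensorProduct.assoc k M' H H).symm (m ⊗ₜ[k] e)) =
          (TensorProduct.assoc k (M' ⊗[k] H') H H).symm (ρM' m ⊗ₜ[k] e) := by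
      intro m e
      induction e using TensorProduct.induction_on with
      | zero => simp only [map_zero, LinearMap.zero_apply, TensorProduct.tmul_zero,
          TensorProduct.zero_tmul, zero_mul, mul_zero]
      | tmul g₁ g₂ =>
        simp only [TensorProduct.assoc_symm_tmul, LinearMap.rTensor_tmul, hF]
      | add e₁ e₂ ih1 ih2 => simp only [TensorProduct.tmul_add, map_add, ih1, ih2]
    intro ξ
    induction ξ using TensorProduct.induction_on with
    | zero => simp only [map_zero, LinearMap.zero_apply, TensorProduct.tmul_zero,
          TensorProduct.zero_tmul, zero_mul, mul_zero]
    | tmul m g =>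
      rw [eδ, hN1' m (Δ g)]
      simp only [hΘL, hF, LinearMap.comp_apply, LinearEquiv.coe_coe,
        LinearMap.rTensor_tmul, LinearMap.lTensor_tmul]
    | add ξ₁ ξ₂ ih1 ih2 => simp only [map_add, ih1, ih2]
  have hN2 : ∀ ξ : M' ⊗[k] H, LinearMap.rTensor H G (δ ξ) = ΘL (G ξ) := by
    intro ξ
    induction ξ using TensorProduct.induction_on with
    | zero => simp only [map_zero, LinearMap.zero_apply, TensorProduct.tmul_zero,
          TensorProduct.zero_tmul, zero_mul, mul_zero]
    | tmul m g =>
      set WL : H ⊗[k] H →ₗ[k] (M' ⊗[k] H') ⊗[k] H :=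
        (TensorProduct.assoc k M' H' H).symm.toLinearMap ∘ₗ
          (TensorProduct.mk k M' (H' ⊗[k] H) m) ∘ₗ LinearMap.rTensor H χL with hWL
      set VL : H ⊗[k] (H ⊗[k] H) →ₗ[k] ((M' ⊗[k] H') ⊗[k] H) ⊗[k] H :=
        (TensorProduct.assoc k (M' ⊗[k] H') H H).symm.toLinearMap ∘ₗ
          TensorProduct.map ((TensorProduct.mk k M' H' m) ∘ₗ χL)
            (LinearMap.id : H ⊗[k] H →ₗ[k] H ⊗[k] H) with hVL
      have claimA : ∀ c : H ⊗[k] H,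
          LinearMap.rTensor H G ((TensorProduct.assoc k M' H H).symm (m ⊗ₜ[k] c)) =
            LinearMap.rTensor H WL (LinearMap.rTensor H Δ c) := by
        intro c
        induction c using TensorProduct.induction_on with
        | zero => simp only [map_zero, LinearMap.zero_apply, TensorProduct.tmul_zero,
          TensorProduct.zero_tmul, zero_mul, mul_zero]
        | tmul g₁ g₂ =>
          simp only [TensorProduct.assoc_symm_tmul, LinearMap.rTensor_tmul, hG, hWL,
            LinearMap.comp_apply, LinearEquiv.coe_coe, LinearMap.lTensor_tmul,
            TensorProduct.mk_apply]
        | add c₁ c₂ ih1 ih2 => simp only [TensorProduct.tmul_add, map_add, ih1, ih2]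
      have claimB : ∀ c : H ⊗[k] H,
          ΘL ((TensorProduct.assoc k M' H' H).symm
              (m ⊗ₜ[k] (LinearMap.rTensor H χL c))) =
            VL (LinearMap.lTensor H Δ c) := by
        intro c
        induction c using TensorProduct.induction_on with
        | zero => simp only [map_zero, LinearMap.zero_apply, TensorProduct.tmul_zero,
          TensorProduct.zero_tmul, zero_mul, mul_zero]
        | tmul g₁ g₂ =>
          simp only [LinearMap.rTensor_tmul, TensorProduct.assoc_symm_tmul, hΘL, hVL,
            LinearMap.comp_apply, LinearEquiv.coe_coe, LinearMap.lTensor_tmul,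
            TensorProduct.map_tmul, TensorProduct.mk_apply, LinearMap.id_coe, id_eq]
        | add c₁ c₂ ih1 ih2 => simp only [TensorProduct.tmul_add, map_add, ih1, ih2]
      have claimC : ∀ t : H ⊗[k] (H ⊗[k] H),
          LinearMap.rTensor H WL ((TensorProduct.assoc k H H H).symm t) = VL t := by
        intro t
        induction t using TensorProduct.induction_on with
        | zero => simp only [map_zero, LinearMap.zero_apply, TensorProduct.tmul_zero,
          TensorProduct.zero_tmul, zero_mul, mul_zero]
        | tmul g₁ u =>
          induction u using TensorProduct.induction_on with
          | zero => simp only [map_zero, LinearMap.zero_apply, TensorProduct.tmul_zero,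
          TensorProduct.zero_tmul, zero_mul, mul_zero]
          | tmul h₁ h₂ =>
            simp only [TensorProduct.assoc_symm_tmul, LinearMap.rTensor_tmul, hWL, hVL,
              LinearMap.comp_apply, LinearEquiv.coe_coe, TensorProduct.map_tmul,
              TensorProduct.mk_apply, LinearMap.id_coe, id_eq]
          | add u₁ u₂ ih1 ih2 => simp only [TensorProduct.tmul_add, map_add, ih1, ih2]
        | add t₁ t₂ ih1 ih2 => simp only [map_add, ih1, ih2]
      have e2 : G (m ⊗ₜ[k] g) = (TensorProduct.assoc k M' H' H).symm
          (m ⊗ₜ[k] LinearMap.rTensor H χL (Δ g)) := by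
        simp only [hG, LinearMap.comp_apply, LinearEquiv.coe_coe, LinearMap.lTensor_tmul]
      rw [eδ, e2, claimA, hco, claimC, ← claimB]
    | add ξ₁ ξ₂ ih1 ih2 => simp only [map_add, ih1, ih2]
  have hδcot : ∀ ξ ∈ cot, δ ξ ∈ LinearMap.range (LinearMap.rTensor H cot.subtype) := by
    intro ξ hξ
    have h0 : LinearMap.rTensor H (F - G) (δ ξ) = 0 := by
      rw [LinearMap.rTensor_sub]
      show LinearMap.rTensor H F (δ ξ) - LinearMap.rTensor H G (δ ξ) = 0
      rw [hN1, hN2, show ΘL (F ξ) - ΘL (G ξ) = ΘL (F ξ - G ξ) from (map_sub ΘL _ _).symm,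
        (hmem ξ).mp hξ, map_zero]
    have hex := Module.Flat.rTensor_exact (R := k) H
      (LinearMap.exact_subtype_ker_map (F - G))
    exact (hex (δ ξ)).mp h0
  -- coassociativity of the coaction
  have hC5 : (LinearMap.rTensor H δ) ∘ₗ δ =
      (TensorProduct.assoc k (M' ⊗[k] H) H H).symm.toLinearMap ∘ₗ
        (LinearMap.lTensor (M' ⊗[k] H) Coalgebra.comul) ∘ₗ δ := by
    apply TensorProduct.ext'
    intro m g
    set W2 : H ⊗[k] H →ₗ[k] (M' ⊗[k] H) ⊗[k] H :=
      (TensorProduct.assoc k M' H H).symm.toLinearMap ∘ₗ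
        TensorProduct.mk k M' (H ⊗[k] H) m with hW2
    set V2 : H ⊗[k] (H ⊗[k] H) →ₗ[k] ((M' ⊗[k] H) ⊗[k] H) ⊗[k] H :=
      (TensorProduct.assoc k (M' ⊗[k] H) H H).symm.toLinearMap ∘ₗ
        TensorProduct.map (TensorProduct.mk k M' H m)
          (LinearMap.id : H ⊗[k] H →ₗ[k] H ⊗[k] H) with hV2
    have claimA2 : ∀ c : H ⊗[k] H,
        LinearMap.rTensor H δ ((TensorProduct.assoc k M' H H).symm (m ⊗ₜ[k] c)) =
          LinearMap.rTensor H W2 (LinearMap.rTensor H Δ c) := by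
      intro c
      induction c using TensorProduct.induction_on with
      | zero => simp only [map_zero, LinearMap.zero_apply, TensorProduct.tmul_zero,
          TensorProduct.zero_tmul, zero_mul, mul_zero]
      | tmul g₁ g₂ =>
        simp only [TensorProduct.assoc_symm_tmul, LinearMap.rTensor_tmul, eδ, hW2,
          LinearMap.comp_apply, LinearEquiv.coe_coe, TensorProduct.mk_apply]
      | add c₁ c₂ ih1 ih2 => simp only [TensorProduct.tmul_add, map_add, ih1, ih2]
    have claimB2 : ∀ c : H ⊗[k] H,
        (TensorProduct.assoc k (M' ⊗[k] H) H H).symm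
            (LinearMap.lTensor (M' ⊗[k] H) Δ
              ((TensorProduct.assoc k M' H H).symm (m ⊗ₜ[k] c))) =
          V2 (LinearMap.lTensor H Δ c) := by
      intro c
      induction c using TensorProduct.induction_on with
      | zero => simp only [map_zero, LinearMap.zero_apply, TensorProduct.tmul_zero,
          TensorProduct.zero_tmul, zero_mul, mul_zero]
      | tmul g₁ g₂ =>
        simp only [TensorProduct.assoc_symm_tmul, LinearMap.lTensor_tmul, hV2,
          LinearMap.comp_apply, LinearEquiv.coe_coe, TensorProduct.map_tmul,
          TensorProduct.mk_apply, LinearMap.id_coe, id_eq]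
      | add c₁ c₂ ih1 ih2 => simp only [TensorProduct.tmul_add, map_add, ih1, ih2]
    have claimC2 : ∀ t : H ⊗[k] (H ⊗[k] H),
        LinearMap.rTensor H W2 ((TensorProduct.assoc k H H H).symm t) = V2 t := by
      intro t
      induction t using TensorProduct.induction_on with
      | zero => simp only [map_zero, LinearMap.zero_apply, TensorProduct.tmul_zero,
          TensorProduct.zero_tmul, zero_mul, mul_zero]
      | tmul g₁ u =>
        induction u using TensorProduct.induction_on with
        | zero => simp only [map_zero, LinearMap.zero_apply, TensorProduct.tmul_zero,
          TensorProduct.zero_tmul, zero_mul, mul_zero]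
        | tmul h₁ h₂ =>
          simp only [TensorProduct.assoc_symm_tmul, LinearMap.rTensor_tmul, hW2, hV2,
            LinearMap.comp_apply, LinearEquiv.coe_coe, TensorProduct.map_tmul,
            TensorProduct.mk_apply, LinearMap.id_coe, id_eq]
        | add u₁ u₂ ih1 ih2 => simp only [TensorProduct.tmul_add, map_add, ih1, ih2]
      | add t₁ t₂ ih1 ih2 => simp only [map_add, ih1, ih2]
    show LinearMap.rTensor H δ (δ (m ⊗ₜ[k] g)) =
      (TensorProduct.assoc k (M' ⊗[k] H) H H).symm
        (LinearMap.lTensor (M' ⊗[k] H) Coalgebra.comul (δ (m ⊗ₜ[k] g)))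
    rw [← hΔ, eδ, claimA2, hco, claimC2, ← claimB2]
  -- counitality of the coaction
  have hC6 : (TensorProduct.rid k (M' ⊗[k] H)).toLinearMap ∘ₗ
      (LinearMap.lTensor (M' ⊗[k] H) Coalgebra.counit) ∘ₗ δ = LinearMap.id := by
    apply TensorProduct.ext'
    intro m g
    have claimD : ∀ c : H ⊗[k] H,
        (TensorProduct.rid k (M' ⊗[k] H))
            (LinearMap.lTensor (M' ⊗[k] H) Coalgebra.counit
              ((TensorProduct.assoc k M' H H).symm (m ⊗ₜ[k] c))) =
          (TensorProduct.mk k M' H m)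
            ((TensorProduct.rid k H) (LinearMap.lTensor H Coalgebra.counit c)) := by
      intro c
      induction c using TensorProduct.induction_on with
      | zero => simp only [map_zero, LinearMap.zero_apply, TensorProduct.tmul_zero,
          TensorProduct.zero_tmul, zero_mul, mul_zero]
      | tmul g₁ g₂ =>
        simp only [TensorProduct.assoc_symm_tmul, LinearMap.lTensor_tmul,
          TensorProduct.rid_tmul, TensorProduct.mk_apply, TensorProduct.tmul_smul,
          map_smul]
      | add c₁ c₂ ih1 ih2 => simp only [TensorProduct.tmul_add, map_add, ih1, ih2]
    show (TensorProduct.rid k (M' ⊗[k] H))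
        (LinearMap.lTensor (M' ⊗[k] H) Coalgebra.counit (δ (m ⊗ₜ[k] g))) =
      m ⊗ₜ[k] g
    rw [eδ, claimD, hΔ, Coalgebra.lTensor_counit_comul]
    simp
  -- Hopf-module compatibility
  set SL : (A ⊗[k] H) ⊗[k] H →ₗ[k] (M' ⊗[k] H) ⊗[k] H →ₗ[k] (M' ⊗[k] H) ⊗[k] H :=
    TensorProduct.lift (((TensorProduct.mapBilinear (RingHom.id k) (M' ⊗[k] H) H (M' ⊗[k] H) H).comp
      (smH ∘ₗ TensorProduct.map αL LinearMap.id)).compl₂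
        ((LinearMap.mul k H).flip)) with hSLdef
  have hSL : ∀ (x : A ⊗[k] H) (h : H) (t : M' ⊗[k] H) (g : H),
      SL (x ⊗ₜ[k] h) (t ⊗ₜ[k] g) =
        smH (TensorProduct.map αL LinearMap.id x) t ⊗ₜ[k] (g * h) := by
    intro x h t g
    simp [hSLdef, TensorProduct.lift.tmul, LinearMap.compl₂_apply,
      TensorProduct.mapBilinear_apply, LinearMap.mul_apply', LinearMap.flip_apply]
  have claim7 : ∀ (a : A) (m : M') (d e : H ⊗[k] H),
      (TensorProduct.assoc k M' H H).symm (actM' (αL a) m ⊗ₜ[k] (e * d)) =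
        SL ((TensorProduct.assoc k A H H).symm (a ⊗ₜ[k] d))
          ((TensorProduct.assoc k M' H H).symm (m ⊗ₜ[k] e)) := by
    intro a m d
    induction d using TensorProduct.induction_on with
    | zero => intro e; simp only [map_zero, LinearMap.zero_apply, TensorProduct.tmul_zero,
          TensorProduct.zero_tmul, zero_mul, mul_zero]
    | tmul d₁ d₂ =>
      intro e
      induction e using TensorProduct.induction_on with
      | zero => simp only [map_zero, LinearMap.zero_apply, TensorProduct.tmul_zero,
          TensorProduct.zero_tmul, zero_mul, mul_zero]
      | tmul e₁ e₂ =>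
        simp only [Algebra.TensorProduct.tmul_mul_tmul,
          TensorProduct.assoc_symm_tmul, hSL, TensorProduct.map_tmul,
          LinearMap.id_coe, id_eq, hsmH]
      | add e₁ e₂ ih1 ih2 =>
        simp only [add_mul, map_add, TensorProduct.tmul_add, ih1, ih2]
    | add d₁ d₂ ih1 ih2 =>
      intro e
      simp only [mul_add, map_add, TensorProduct.tmul_add, LinearMap.add_apply,
        ih1 e, ih2 e]
  have claim7' : ∀ (c : A ⊗[k] H) (ξ : M' ⊗[k] H),
      δ (smH (TensorProduct.map αL LinearMap.id c) ξ) =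
        SL ((TensorProduct.assoc k A H H).symm (LinearMap.lTensor A Δ c)) (δ ξ) := by
    intro c
    induction c using TensorProduct.induction_on with
    | zero => intro ξ; simp only [map_zero, LinearMap.zero_apply, TensorProduct.tmul_zero,
          TensorProduct.zero_tmul, zero_mul, mul_zero]
    | tmul a u =>
      intro ξ
      induction ξ using TensorProduct.induction_on with
      | zero => simp only [map_zero, LinearMap.zero_apply, TensorProduct.tmul_zero,
          TensorProduct.zero_tmul, zero_mul, mul_zero]
      | tmul m g =>
        simp only [TensorProduct.map_tmul, LinearMap.id_coe, id_eq, hsmH,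
          LinearMap.lTensor_tmul, eδ, hΔmul]
        exact claim7 a m (Δ u) (Δ g)
      | add ξ₁ ξ₂ ih1 ih2 => simp only [map_add, ih1, ih2]
    | add c₁ c₂ ih1 ih2 =>
      intro ξ; simp only [map_add, LinearMap.add_apply, ih1, ih2]
  have claim7'' : ∀ (c : A ⊗[k] H) (ξ : (M' ⊗[k] H) ⊗[k] H),
      smMH c ξ = SL (LinearMap.rTensor H ρA.toLinearMap c) ξ := by
    intro c
    induction c using TensorProduct.induction_on with
    | zero => intro ξ; simp only [map_zero, LinearMap.zero_apply, TensorProduct.tmul_zero,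
          TensorProduct.zero_tmul, zero_mul, mul_zero]
    | tmul a u =>
      intro ξ
      induction ξ using TensorProduct.induction_on with
      | zero => simp only [map_zero, LinearMap.zero_apply, TensorProduct.tmul_zero,
          TensorProduct.zero_tmul, zero_mul, mul_zero]
      | tmul t g =>
        rw [hsmMH, LinearMap.rTensor_tmul, AlgHom.toLinearMap_apply, hSL, hactA]
      | add ξ₁ ξ₂ ih1 ih2 => simp only [map_add, ih1, ih2]
    | add c₁ c₂ ih1 ih2 =>
      intro ξ; simp only [map_add, LinearMap.add_apply, ih1, ih2]
  have hC7 : ∀ a : A, δ ∘ₗ actA a = (smMH (ρA a)) ∘ₗ δ := by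
    intro a
    apply LinearMap.ext
    intro ξ
    show δ (actA a ξ) = smMH (ρA a) (δ ξ)
    rw [hactA, claim7', ← hE, ← claim7'']
  exact ⟨hC1, hone, hmul, hδcot, hC5, hC6, hC7⟩
end

section
/- Let k be a field, H a Hopf algebra over k whose antipode S is bijective, M a right H-comodule with coaction ρ_M(m) = m₍₀₎ ⊗ m₍₁₎, and V a left H-comodule with coaction λ_V(v) = v₍₋₁₎ ⊗ v₍₀₎. Equip M ⊗ V with the right H-coaction ρ(m ⊗ v) := (m₍₀₎ ⊗ v₍₀₎) ⊗ S⁻¹(v₍₋₁₎) m₍₁₎. Then the coinvariants {ξ ∈ M ⊗ V : ρ(ξ) = ξ ⊗ 1_H} coincide, as a subspace of M ⊗ V, with the cotensor product M □^H V := {ξ ∈ M ⊗ V : (ρ_M ⊗ id_V)(ξ) = (id_M ⊗ λ_V)(ξ) in M ⊗ H ⊗ V}. -/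
open TensorProduct LinearMap

section aux
open Coalgebra HopfAlgebra

variable {R A : Type*} [CommSemiring R] [Semiring A] [HopfAlgebra R A]

lemma counit_smul_right_sum {ι : Type*} {a : A} (r : Coalgebra.Repr R a ι) :
    ∑ i ∈ r.index, counit (R := R) (r.left i) • r.right i = a := by
  simpa only [map_sum, lid_tmul, one_smul] using
    congrArg (TensorProduct.lid R A) (sum_counit_tmul_eq r)

lemma counit_smul_left_sum {ι : Type*} {a : A} (r : Coalgebra.Repr R a ι) :
    ∑ i ∈ r.index, counit (R := R) (r.right i) • r.left i = a := by
  simpa only [map_sum, rid_tmul, one_smul] using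
    congrArg (TensorProduct.rid R A) (sum_tmul_counit_eq r)

noncomputable def Coalgebra.Repr.mul' {ι κ : Type*} {a b : A} (ra : Coalgebra.Repr R a ι) (rb : Coalgebra.Repr R b κ) :
    Coalgebra.Repr R (a * b) (ι × κ) where
  index := ra.index ×ˢ rb.index
  left := fun p => ra.left p.1 * rb.left p.2
  right := fun p => ra.right p.1 * rb.right p.2
  eq := by
    rw [Bialgebra.comul_mul, ← ra.eq, ← rb.eq, Finset.sum_mul_sum]
    rw [Finset.sum_product]
    simp [Algebra.TensorProduct.tmul_mul_tmul]

lemma contract_antipode_left {ι : Type*} {κ : ι → Type*} {a : A} (r : Coalgebra.Repr R a ι)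
    (r₂ : ∀ i : r.ι, Coalgebra.Repr R (r.right i) (κ i)) :
    ∑ i ∈ r.index, ∑ p ∈ (r₂ i).index,
      (antipode (R := R) (r.left i) * (r₂ i).left p) ⊗ₜ[R] (r₂ i).right p
      = (1 : A) ⊗ₜ[R] a := by
  have key := sum_tmul_tmul_eq r (fun i => Coalgebra.Repr.arbitrary R (r.left i)) r₂
  set Φ : A ⊗[R] (A ⊗[R] A) →ₗ[R] A ⊗[R] A :=
    (LinearMap.rTensor A ((LinearMap.mul' R A) ∘ₗ
      (LinearMap.rTensor A (antipode (R := R))))) ∘ₗ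
      (TensorProduct.assoc R A A A).symm.toLinearMap with hΦ
  have hΦ_apply : ∀ (x y z : A), Φ (x ⊗ₜ (y ⊗ₜ z)) = (antipode (R := R) x * y) ⊗ₜ z := by
    intro x y z; simp [hΦ]
  have step := congrArg Φ key
  rw [map_sum, map_sum] at step
  simp only [map_sum, hΦ_apply] at step
  rw [← step]
  calc ∑ i ∈ r.index, ∑ j ∈ (Coalgebra.Repr.arbitrary R (r.left i)).index,
        (antipode (R := R) ((Coalgebra.Repr.arbitrary R (r.left i)).left j) *
          (Coalgebra.Repr.arbitrary R (r.left i)).right j) ⊗ₜ[R] r.right i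
      = ∑ i ∈ r.index, (1 : A) ⊗ₜ[R] (counit (R := R) (r.left i) • r.right i) := by
        refine Finset.sum_congr rfl fun i _ => ?_
        rw [← sum_tmul, sum_antipode_mul_eq_algebraMap_counit (Coalgebra.Repr.arbitrary R (r.left i)),
          Algebra.algebraMap_eq_smul_one, smul_tmul]
    _ = (1 : A) ⊗ₜ[R] a := by rw [← tmul_sum, counit_smul_right_sum r]

/-- The antipode is anti-multiplicative. -/
theorem antipode_mul_rev (a b : A) :
    antipode (R := R) (a * b) = antipode (R := R) b * antipode (R := R) a := by
  set S : A →ₗ[R] A := antipode (R := R) with hS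
  set ra := Coalgebra.Repr.arbitrary R a
  set rb := Coalgebra.Repr.arbitrary R b
  set ra2 : ∀ i : ra.ι, Coalgebra.Repr R (ra.right i) (A × A) :=
    fun i => Coalgebra.Repr.arbitrary R (ra.right i) with hra2
  set rb2 : ∀ j : rb.ι, Coalgebra.Repr R (rb.right j) (A × A) :=
    fun j => Coalgebra.Repr.arbitrary R (rb.right j) with hrb2
  set X : A := ∑ j ∈ rb.index, ∑ q ∈ (rb2 j).index, ∑ i ∈ ra.index, ∑ p ∈ (ra2 i).index,
    S (rb.left j) * (S (ra.left i) * (ra2 i).left p) *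
      ((rb2 j).left q * S ((ra2 i).right p * (rb2 j).right q)) with hX
  have claim2 : X = S (a * b) := by
    have inner : ∀ (j : rb.ι) (q : (rb2 j).ι),
        ∑ i ∈ ra.index, ∑ p ∈ (ra2 i).index,
          S (rb.left j) * (S (ra.left i) * (ra2 i).left p) *
            ((rb2 j).left q * S ((ra2 i).right p * (rb2 j).right q))
        = (S (rb.left j) * (rb2 j).left q) * S (a * (rb2 j).right q) := by
      intro j q
      set Ψ : A ⊗[R] A →ₗ[R] A :=
        (LinearMap.mul' R A) ∘ₗ (TensorProduct.map
          (LinearMap.mulLeft R (S (rb.left j)))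
          ((LinearMap.mulLeft R ((rb2 j).left q)) ∘ₗ S ∘ₗ
            (LinearMap.mulRight R ((rb2 j).right q)))) with hΨ
      have hΨ_apply : ∀ x y : A, Ψ (x ⊗ₜ y)
          = S (rb.left j) * x * ((rb2 j).left q * S (y * (rb2 j).right q)) := by
        intro x y; simp [hΨ]
      have := congrArg Ψ (contract_antipode_left ra ra2)
      simp only [map_sum, hΨ_apply] at this
      rw [this, mul_one, ← mul_assoc]
    calc X = ∑ j ∈ rb.index, ∑ q ∈ (rb2 j).index,
        (S (rb.left j) * (rb2 j).left q) * S (a * (rb2 j).right q) :=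
          Finset.sum_congr rfl fun j _ => Finset.sum_congr rfl fun q _ => inner j q
      _ = S (a * b) := by
          set Ψ' : A ⊗[R] A →ₗ[R] A :=
            (LinearMap.mul' R A) ∘ₗ (TensorProduct.map LinearMap.id
              (S ∘ₗ (LinearMap.mulLeft R a))) with hΨ'
          have hΨ'_apply : ∀ x y : A, Ψ' (x ⊗ₜ y) = x * S (a * y) := by
            intro x y; simp [hΨ']
          have := congrArg Ψ' (contract_antipode_left rb rb2)
          simp only [map_sum, hΨ'_apply] at this
          rw [this, one_mul]
  have claim1 : X = S b * S a := by
    have e1 : X = ∑ j ∈ rb.index, ∑ i ∈ ra.index, ∑ p ∈ (ra2 i).index, ∑ q ∈ (rb2 j).index,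
        S (rb.left j) * (S (ra.left i) * (ra2 i).left p) *
          ((rb2 j).left q * S ((ra2 i).right p * (rb2 j).right q)) := by
      refine Finset.sum_congr rfl fun j _ => ?_
      rw [Finset.sum_comm]
      exact Finset.sum_congr rfl fun i _ => Finset.sum_comm ..
    have e2 : ∀ (j : rb.ι) (i : ra.ι), ∑ p ∈ (ra2 i).index, ∑ q ∈ (rb2 j).index,
        S (rb.left j) * (S (ra.left i) * (ra2 i).left p) *
          ((rb2 j).left q * S ((ra2 i).right p * (rb2 j).right q))
        = (counit (R := R) (ra.right i) * counit (R := R) (rb.right j)) •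
            (S (rb.left j) * S (ra.left i)) := by
      intro j i
      have hmm : ∀ (p : (ra2 i).ι) (q : (rb2 j).ι),
          S (rb.left j) * (S (ra.left i) * (ra2 i).left p) *
            ((rb2 j).left q * S ((ra2 i).right p * (rb2 j).right q))
          = (S (rb.left j) * S (ra.left i)) *
            (((ra2 i).left p * (rb2 j).left q) *
              S ((ra2 i).right p * (rb2 j).right q)) := by
        intro p q; simp only [mul_assoc]
      simp only [hmm]
      simp only [← Finset.mul_sum]
      have e3 : ∑ p ∈ (ra2 i).index, ∑ q ∈ (rb2 j).index,
          ((ra2 i).left p * (rb2 j).left q) * S ((ra2 i).right p * (rb2 j).right q)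
          = algebraMap R A (counit (R := R) (ra.right i * rb.right j)) := by
        rw [← sum_mul_antipode_eq_algebraMap_counit (Coalgebra.Repr.mul' (ra2 i) (rb2 j))]
        rw [← Finset.sum_product']
        rfl
      rw [e3, Bialgebra.counit_mul, ← Algebra.commutes, ← Algebra.smul_def]
    have ha : (∑ i ∈ ra.index, counit (R := R) (ra.right i) • S (ra.left i)) = S a := by
      simp only [← map_smul]
      rw [← map_sum, counit_smul_left_sum ra]
    have hb : (∑ j ∈ rb.index, counit (R := R) (rb.right j) • S (rb.left j)) = S b := by
      simp only [← map_smul]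
      rw [← map_sum, counit_smul_left_sum rb]
    have e4 : ∀ j : rb.ι, ∑ i ∈ ra.index,
        (counit (R := R) (ra.right i) * counit (R := R) (rb.right j)) •
          (S (rb.left j) * S (ra.left i))
        = counit (R := R) (rb.right j) • (S (rb.left j) * S a) := by
      intro j
      have e5 : ∀ i : ra.ι, (counit (R := R) (ra.right i) * counit (R := R) (rb.right j)) •
          (S (rb.left j) * S (ra.left i))
          = counit (R := R) (rb.right j) •
            (S (rb.left j) * (counit (R := R) (ra.right i) • S (ra.left i))) := by
        intro i
        rw [mul_smul_comm, ← smul_smul, smul_comm]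
      simp only [e5]
      rw [← Finset.smul_sum, ← Finset.mul_sum, ha]
    rw [e1]
    simp only [e2, e4]
    simp only [← smul_mul_assoc]
    rw [← Finset.sum_mul, hb]
  rw [← claim2]
  exact claim1

lemma antipode_one' : antipode (R := R) (1 : A) = 1 := by
  have := mul_antipode_rTensor_comul_apply (R := R) (1 : A)
  simpa [Bialgebra.comul_one, Algebra.TensorProduct.one_def] using this

lemma antipode_algebraMap' (c : R) :
    antipode (R := R) (algebraMap R A c) = algebraMap R A c := by
  rw [Algebra.algebraMap_eq_smul_one, map_smul, antipode_one']

section sinv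
variable (Sinv : A →ₗ[R] A)
  (hS₁ : ∀ h : A, Sinv (antipode (R := R) h) = h)
  (hS₂ : ∀ h : A, antipode (R := R) (Sinv h) = h)

include hS₁ hS₂

/-- `∑ S⁻¹(x₍₂₎) x₍₁₎ = ε(x) 1`. -/
lemma sinv_cop_left (x : A) :
    (LinearMap.mul' R A) ((LinearMap.rTensor A Sinv)
      ((TensorProduct.comm R A A) (comul (R := R) x)))
      = algebraMap R A (counit (R := R) x) := by
  have hinj : ∀ y z : A, antipode (R := R) y = antipode (R := R) z → y = z := by
    intro y z h
    rw [← hS₁ y, h, hS₁ z]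
  set r := Coalgebra.Repr.arbitrary R x
  have hlhs : (LinearMap.mul' R A) ((LinearMap.rTensor A Sinv)
      ((TensorProduct.comm R A A) (comul (R := R) x)))
      = ∑ i ∈ r.index, Sinv (r.right i) * r.left i := by
    rw [← r.eq]
    simp [map_sum]
  rw [hlhs]
  refine hinj _ _ ?_
  rw [map_sum, antipode_algebraMap']
  calc ∑ i ∈ r.index, antipode (R := R) (Sinv (r.right i) * r.left i)
      = ∑ i ∈ r.index, antipode (R := R) (r.left i) * r.right i := by
        refine Finset.sum_congr rfl fun i _ => ?_
        rw [antipode_mul_rev, hS₂]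
    _ = algebraMap R A (counit (R := R) x) := sum_antipode_mul_eq_algebraMap_counit r

/-- `∑ x₍₂₎ S⁻¹(x₍₁₎) = ε(x) 1`. -/
lemma sinv_cop_right (x : A) :
    (LinearMap.mul' R A) ((TensorProduct.comm R A A)
      ((LinearMap.rTensor A Sinv) (comul (R := R) x)))
      = algebraMap R A (counit (R := R) x) := by
  have hinj : ∀ y z : A, antipode (R := R) y = antipode (R := R) z → y = z := by
    intro y z h
    rw [← hS₁ y, h, hS₁ z]
  set r := Coalgebra.Repr.arbitrary R x
  have hlhs : (LinearMap.mul' R A) ((TensorProduct.comm R A A)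
      ((LinearMap.rTensor A Sinv) (comul (R := R) x)))
      = ∑ i ∈ r.index, r.right i * Sinv (r.left i) := by
    rw [← r.eq]
    simp [map_sum]
  rw [hlhs]
  refine hinj _ _ ?_
  rw [map_sum, antipode_algebraMap']
  calc ∑ i ∈ r.index, antipode (R := R) (r.right i * Sinv (r.left i))
      = ∑ i ∈ r.index, r.left i * antipode (R := R) (r.right i) := by
        refine Finset.sum_congr rfl fun i _ => ?_
        rw [antipode_mul_rev, hS₂]
    _ = algebraMap R A (counit (R := R) x) := sum_mul_antipode_eq_algebraMap_counit r

end sinv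

end aux


open Coalgebra HopfAlgebra in
/-- **Coinvariants of `M ◁ V` are the cotensor product `M □^H V`.**
Let `H` be a Hopf algebra over a field `k` with bijective antipode `S` (with inverse
`Sinv`), `M` a right `H`-comodule and `V` a left `H`-comodule.  Equip `M ⊗ V` with the
right `H`-coaction `m ⊗ v ↦ (m₍₀₎ ⊗ v₍₀₎) ⊗ S⁻¹(v₍₋₁₎) m₍₁₎`.  Then the coinvariants of
`M ⊗ V` coincide with the cotensor product
`M □^H V = {ξ : (ρ_M ⊗ id)(ξ) = (id ⊗ λ_V)(ξ)}`. -/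
theorem coinvariants_eq_cotensor
    (k H M V : Type*) [Field k] [Ring H] [HopfAlgebra k H]
    [AddCommGroup M] [Module k M] [AddCommGroup V] [Module k V]
    (Sinv : H →ₗ[k] H)
    (hS₁ : ∀ h : H, Sinv (HopfAlgebra.antipode (R := k) h) = h)
    (hS₂ : ∀ h : H, HopfAlgebra.antipode (R := k) (Sinv h) = h)
    -- `M` is a right `H`-comodule
    (ρM : M →ₗ[k] M ⊗[k] H)
    (hρM_coassoc : (LinearMap.rTensor H ρM) ∘ₗ ρM =
      (TensorProduct.assoc k M H H).symm.toLinearMap ∘ₗ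
        (LinearMap.lTensor M Coalgebra.comul) ∘ₗ ρM)
    (hρM_counit : (TensorProduct.rid k M).toLinearMap ∘ₗ
      (LinearMap.lTensor M Coalgebra.counit) ∘ₗ ρM = LinearMap.id)
    -- `V` is a left `H`-comodule
    (lamV : V →ₗ[k] H ⊗[k] V)
    (hlamV_coassoc : (LinearMap.rTensor V Coalgebra.comul) ∘ₗ lamV =
      (TensorProduct.assoc k H H V).symm.toLinearMap ∘ₗ
        (LinearMap.lTensor H lamV) ∘ₗ lamV)
    (hlamV_counit : (TensorProduct.lid k V).toLinearMap ∘ₗ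
      (LinearMap.rTensor V Coalgebra.counit) ∘ₗ lamV = LinearMap.id) :
    -- the right `H`-coaction on `M ⊗ V`: `m ⊗ v ↦ (m₍₀₎ ⊗ v₍₀₎) ⊗ S⁻¹(v₍₋₁₎) m₍₁₎`
    let δ : M ⊗[k] V →ₗ[k] (M ⊗[k] V) ⊗[k] H :=
      (LinearMap.lTensor (M ⊗[k] V)
          ((LinearMap.mul' k H) ∘ₗ (LinearMap.rTensor H Sinv) ∘ₗ
            (TensorProduct.comm k H H).toLinearMap)) ∘ₗ
        (TensorProduct.tensorTensorTensorComm k M H V H).toLinearMap ∘ₗ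
        (LinearMap.lTensor (M ⊗[k] H) (TensorProduct.comm k H V).toLinearMap) ∘ₗ
        (TensorProduct.map ρM lamV)
    {ξ : M ⊗[k] V | δ ξ = ξ ⊗ₜ[k] (1 : H)} =
      {ξ : M ⊗[k] V | (LinearMap.rTensor V ρM) ξ =
        (TensorProduct.assoc k M H V).symm ((LinearMap.lTensor M lamV) ξ)} := by
  intro δ
  -- abbreviations
  set φ : H ⊗[k] H →ₗ[k] H :=
    (LinearMap.mul' k H) ∘ₗ (LinearMap.rTensor H Sinv) ∘ₗ
      (TensorProduct.comm k H H).toLinearMap with hφ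
  set φ' : H ⊗[k] H →ₗ[k] H :=
    (LinearMap.mul' k H) ∘ₗ (TensorProduct.comm k H H).toLinearMap ∘ₗ
      (LinearMap.rTensor H Sinv) with hφ'
  -- the two cop-antipode identities, as linear map identities
  have hA1 : φ ∘ₗ (Coalgebra.comul (R := k) (A := H)) =
      (Algebra.linearMap k H) ∘ₗ (Coalgebra.counit (R := k) (A := H)) := by
    apply LinearMap.ext
    intro x
    simp only [LinearMap.comp_apply, hφ, Algebra.linearMap_apply, LinearEquiv.coe_coe]
    exact sinv_cop_left Sinv hS₁ hS₂ x
  have hA2 : φ' ∘ₗ (Coalgebra.comul (R := k) (A := H)) =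
      (Algebra.linearMap k H) ∘ₗ (Coalgebra.counit (R := k) (A := H)) := by
    apply LinearMap.ext
    intro x
    simp only [LinearMap.comp_apply, hφ', Algebra.linearMap_apply, LinearEquiv.coe_coe]
    exact sinv_cop_right Sinv hS₁ hS₂ x
  set G₀ : (M ⊗[k] H) ⊗[k] (H ⊗[k] V) →ₗ[k] (M ⊗[k] V) ⊗[k] H :=
    (LinearMap.lTensor (M ⊗[k] V) φ) ∘ₗ
      (TensorProduct.tensorTensorTensorComm k M H V H).toLinearMap ∘ₗ
      (LinearMap.lTensor (M ⊗[k] H) (TensorProduct.comm k H V).toLinearMap) with hG₀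
  have hG₀_apply : ∀ (x : M) (a b : H) (w : V),
      G₀ ((x ⊗ₜ a) ⊗ₜ (b ⊗ₜ w)) = (x ⊗ₜ w) ⊗ₜ (Sinv b * a) := by
    intro x a b w
    simp only [hG₀, hφ, LinearMap.comp_apply, LinearEquiv.coe_coe, LinearMap.lTensor_tmul,
      TensorProduct.comm_tmul, TensorProduct.tensorTensorTensorComm_tmul,
      LinearMap.rTensor_tmul, LinearMap.mul'_apply]
  set G' : (M ⊗[k] H) ⊗[k] V →ₗ[k] (M ⊗[k] V) ⊗[k] H :=
    G₀ ∘ₗ (LinearMap.lTensor (M ⊗[k] H) lamV) with hG'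
  have hmapsplit : TensorProduct.map ρM lamV =
      (LinearMap.lTensor (M ⊗[k] H) lamV) ∘ₗ (LinearMap.rTensor V ρM) := by
    apply TensorProduct.ext'
    intro m v
    simp only [TensorProduct.map_tmul, LinearMap.comp_apply, LinearMap.rTensor_tmul,
      LinearMap.lTensor_tmul]
  have hδc : δ = G' ∘ₗ (LinearMap.rTensor V ρM) := by
    show (LinearMap.lTensor (M ⊗[k] V) φ) ∘ₗ
        (TensorProduct.tensorTensorTensorComm k M H V H).toLinearMap ∘ₗ
        (LinearMap.lTensor (M ⊗[k] H) (TensorProduct.comm k H V).toLinearMap) ∘ₗ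
        (TensorProduct.map ρM lamV) = _
    rw [hmapsplit, hG', hG₀]
    simp only [LinearMap.comp_assoc]
  have hδ : ∀ ξ : M ⊗[k] V, δ ξ = G' ((LinearMap.rTensor V ρM) ξ) := by
    intro ξ
    rw [hδc, LinearMap.comp_apply]
  -- the auxiliary multiplication-collecting map C₁ : (m ⊗ (a ⊗ w)) ⊗ h ↦ (m ⊗ (a*h)) ⊗ w
  set C₁ : (M ⊗[k] (H ⊗[k] V)) ⊗[k] H →ₗ[k] (M ⊗[k] H) ⊗[k] V :=
    (TensorProduct.assoc k M H V).symm.toLinearMap ∘ₗ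
      (LinearMap.lTensor M ((TensorProduct.comm k V H).toLinearMap ∘ₗ
        (LinearMap.lTensor V (LinearMap.mul' k H)) ∘ₗ
        (TensorProduct.assoc k V H H).toLinearMap ∘ₗ
        (LinearMap.rTensor H (TensorProduct.comm k H V).toLinearMap))) ∘ₗ
      (TensorProduct.assoc k M (H ⊗[k] V) H).toLinearMap with hC₁
  have hC₁_pure : ∀ (m : M) (a : H) (w : V) (h : H),
      C₁ ((m ⊗ₜ (a ⊗ₜ w)) ⊗ₜ h) = (m ⊗ₜ (a * h)) ⊗ₜ w := by
    intro m a w h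
    simp only [hC₁, LinearMap.comp_apply, LinearEquiv.coe_coe, TensorProduct.assoc_tmul,
      LinearMap.lTensor_tmul, LinearMap.rTensor_tmul, TensorProduct.comm_tmul,
      LinearMap.mul'_apply, TensorProduct.assoc_symm_tmul]
  set W : (M ⊗[k] V) ⊗[k] H →ₗ[k] (M ⊗[k] H) ⊗[k] V :=
    C₁ ∘ₗ (LinearMap.rTensor H (LinearMap.lTensor M lamV)) with hW
  -- pointwise comodule identities
  have hco : ∀ v : V, (LinearMap.lTensor H lamV) (lamV v) =
      (TensorProduct.assoc k H H V) ((LinearMap.rTensor V Coalgebra.comul) (lamV v)) := by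
    intro v
    have := LinearMap.congr_fun hlamV_coassoc v
    simp only [LinearMap.comp_apply, LinearEquiv.coe_coe] at this
    rw [this, LinearEquiv.apply_symm_apply]
  have hcu : ∀ v : V, (LinearMap.rTensor V (Coalgebra.counit (R := k) (A := H))) (lamV v) =
      (1 : k) ⊗ₜ v := by
    intro v
    have := LinearMap.congr_fun hlamV_counit v
    simp only [LinearMap.comp_apply, LinearEquiv.coe_coe, LinearMap.id_apply] at this
    have h2 := congrArg (TensorProduct.lid k V).symm this
    rw [LinearEquiv.symm_apply_apply] at h2
    rw [h2]
    rfl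
  -- core lemma for direction ⇐
  have hCC : ∀ ξ : M ⊗[k] V,
      G' ((TensorProduct.assoc k M H V).symm ((LinearMap.lTensor M lamV) ξ)) =
        ξ ⊗ₜ (1 : H) := by
    intro ξ
    induction ξ using TensorProduct.induction_on with
    | zero => simp only [TensorProduct.tmul_zero, TensorProduct.zero_tmul, map_zero]
    | add ξ₁ ξ₂ ih₁ ih₂ => rw [map_add, map_add, map_add, ih₁, ih₂, TensorProduct.add_tmul]
    | tmul m v =>
      set Fm : H ⊗[k] (H ⊗[k] V) →ₗ[k] (M ⊗[k] V) ⊗[k] H :=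
        (TensorProduct.assoc k M V H).symm.toLinearMap ∘ₗ
          (TensorProduct.mk k M (V ⊗[k] H) m) ∘ₗ
          (TensorProduct.comm k H V).toLinearMap ∘ₗ
          (LinearMap.rTensor V φ) ∘ₗ
          (TensorProduct.assoc k H H V).symm.toLinearMap with hFm
      have hFm_pure : ∀ (b c : H) (w : V),
          Fm (b ⊗ₜ (c ⊗ₜ w)) = (m ⊗ₜ w) ⊗ₜ (Sinv c * b) := by
        intro b c w
        simp only [hFm, hφ, LinearMap.comp_apply, LinearEquiv.coe_coe,
          TensorProduct.assoc_symm_tmul, LinearMap.rTensor_tmul, TensorProduct.comm_tmul,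
          LinearMap.mul'_apply, TensorProduct.mk_apply]
      have step1 : ∀ t : H ⊗[k] V,
          G' ((TensorProduct.assoc k M H V).symm (m ⊗ₜ t)) =
            Fm ((LinearMap.lTensor H lamV) t) := by
        intro t
        induction t using TensorProduct.induction_on with
        | zero => simp only [TensorProduct.tmul_zero, TensorProduct.zero_tmul, map_zero]
        | add t₁ t₂ ih₁ ih₂ =>
          rw [TensorProduct.tmul_add, map_add, map_add, map_add, map_add, ih₁, ih₂]
        | tmul b w =>
          have : (TensorProduct.assoc k M H V).symm (m ⊗ₜ (b ⊗ₜ w)) = (m ⊗ₜ b) ⊗ₜ w :=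
            TensorProduct.assoc_symm_tmul ..
          rw [this, hG', LinearMap.comp_apply, LinearMap.lTensor_tmul, LinearMap.lTensor_tmul]
          generalize lamV w = s
          induction s using TensorProduct.induction_on with
          | zero => simp only [TensorProduct.tmul_zero, TensorProduct.zero_tmul, map_zero]
          | add s₁ s₂ ih₁ ih₂ =>
            rw [TensorProduct.tmul_add, TensorProduct.tmul_add, map_add, map_add, ih₁, ih₂]
          | tmul c w' => rw [hG₀_apply, hFm_pure]
      rw [LinearMap.lTensor_tmul, step1, hco v]
      -- now reduce using A1 and the counit law
      have : ∀ u : (H ⊗[k] H) ⊗[k] V,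
          Fm ((TensorProduct.assoc k H H V) u) =
            ((TensorProduct.assoc k M V H).symm.toLinearMap ∘ₗ
              (TensorProduct.mk k M (V ⊗[k] H) m) ∘ₗ
              (TensorProduct.comm k H V).toLinearMap ∘ₗ
              (LinearMap.rTensor V φ)) u := by
        intro u
        simp only [hFm, LinearMap.comp_apply, LinearEquiv.coe_coe, LinearEquiv.symm_apply_apply]
      rw [this]
      have : (LinearMap.rTensor V φ)
          ((LinearMap.rTensor V (Coalgebra.comul (R := k) (A := H))) (lamV v)) =
          (LinearMap.rTensor V (Algebra.linearMap k H))
            ((LinearMap.rTensor V (Coalgebra.counit (R := k) (A := H))) (lamV v)) := by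
        rw [← LinearMap.comp_apply, ← LinearMap.rTensor_comp, hA1,
          LinearMap.rTensor_comp, LinearMap.comp_apply]
      simp only [LinearMap.comp_apply, LinearEquiv.coe_coe]
      rw [this, hcu v, LinearMap.rTensor_tmul, Algebra.linearMap_apply, map_one]
      simp only [TensorProduct.comm_tmul, TensorProduct.mk_apply, TensorProduct.assoc_symm_tmul]
  -- core lemma for direction ⇒ : W ∘ G' = id
  have hYY : ∀ x : (M ⊗[k] H) ⊗[k] V, W (G' x) = x := by
    intro x
    induction x using TensorProduct.induction_on with
    | zero => simp only [TensorProduct.tmul_zero, TensorProduct.zero_tmul, map_zero]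
    | add x₁ x₂ ih₁ ih₂ => rw [map_add, map_add, ih₁, ih₂]
    | tmul y v =>
      induction y using TensorProduct.induction_on with
      | zero => simp only [TensorProduct.tmul_zero, TensorProduct.zero_tmul, map_zero]
      | add y₁ y₂ ih₁ ih₂ =>
        rw [TensorProduct.add_tmul, map_add, map_add, ih₁, ih₂]
      | tmul m a =>
        set Km : H ⊗[k] (H ⊗[k] V) →ₗ[k] (M ⊗[k] H) ⊗[k] V :=
          (LinearMap.rTensor V ((TensorProduct.mk k M H m) ∘ₗ
            (LinearMap.mulRight k a) ∘ₗ φ')) ∘ₗ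
            (TensorProduct.assoc k H H V).symm.toLinearMap with hKm
        have hKm_pure : ∀ (b c : H) (w : V),
            Km (b ⊗ₜ (c ⊗ₜ w)) = (m ⊗ₜ (c * Sinv b * a)) ⊗ₜ w := by
          intro b c w
          simp only [hKm, hφ', LinearMap.comp_apply, LinearEquiv.coe_coe,
            TensorProduct.assoc_symm_tmul, LinearMap.rTensor_tmul, TensorProduct.comm_tmul,
            LinearMap.mul'_apply, LinearMap.mulRight_apply, TensorProduct.mk_apply]
        have stepY1 : ∀ t : H ⊗[k] V,
            W (G₀ ((m ⊗ₜ a) ⊗ₜ t)) = Km ((LinearMap.lTensor H lamV) t) := by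
          intro t
          induction t using TensorProduct.induction_on with
          | zero => simp only [TensorProduct.tmul_zero, TensorProduct.zero_tmul, map_zero]
          | add t₁ t₂ ih₁ ih₂ =>
            rw [TensorProduct.tmul_add, map_add, map_add, map_add, map_add, ih₁, ih₂]
          | tmul b w =>
            rw [hG₀_apply, LinearMap.lTensor_tmul, hW, LinearMap.comp_apply,
              LinearMap.rTensor_tmul, LinearMap.lTensor_tmul]
            generalize lamV w = s
            induction s using TensorProduct.induction_on with
            | zero => simp only [TensorProduct.tmul_zero, TensorProduct.zero_tmul, map_zero]
            | add s₁ s₂ ih₁ ih₂ =>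
              rw [TensorProduct.tmul_add, TensorProduct.tmul_add,
                TensorProduct.add_tmul, map_add, map_add, ih₁, ih₂]
            | tmul c w' =>
              rw [hC₁_pure, hKm_pure, mul_assoc]
        have eG : G' ((m ⊗ₜ a) ⊗ₜ v) = G₀ ((m ⊗ₜ a) ⊗ₜ (lamV v)) := by
          rw [hG', LinearMap.comp_apply, LinearMap.lTensor_tmul]
        rw [eG, stepY1, hco v]
        have : ∀ u : (H ⊗[k] H) ⊗[k] V,
            Km ((TensorProduct.assoc k H H V) u) =
              (LinearMap.rTensor V ((TensorProduct.mk k M H m) ∘ₗ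
                (LinearMap.mulRight k a) ∘ₗ φ')) u := by
          intro u
          simp only [hKm, LinearMap.comp_apply, LinearEquiv.coe_coe, LinearEquiv.symm_apply_apply]
        rw [this]
        have hmaps : ((TensorProduct.mk k M H m) ∘ₗ (LinearMap.mulRight k a) ∘ₗ φ') ∘ₗ
            (Coalgebra.comul (R := k) (A := H))
            = ((TensorProduct.mk k M H m) ∘ₗ (LinearMap.mulRight k a) ∘ₗ
              (Algebra.linearMap k H)) ∘ₗ (Coalgebra.counit (R := k) (A := H)) := by
          apply LinearMap.ext
          intro x
          have h2 := LinearMap.congr_fun hA2 x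
          simp only [LinearMap.comp_apply] at h2 ⊢
          rw [h2]
        have : (LinearMap.rTensor V ((TensorProduct.mk k M H m) ∘ₗ
            (LinearMap.mulRight k a) ∘ₗ φ'))
            ((LinearMap.rTensor V (Coalgebra.comul (R := k) (A := H))) (lamV v)) =
            (LinearMap.rTensor V ((TensorProduct.mk k M H m) ∘ₗ
              (LinearMap.mulRight k a) ∘ₗ (Algebra.linearMap k H)))
              ((LinearMap.rTensor V (Coalgebra.counit (R := k) (A := H))) (lamV v)) := by
          rw [← LinearMap.rTensor_comp_apply, hmaps, LinearMap.rTensor_comp_apply]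
        rw [this, hcu v, LinearMap.rTensor_tmul]
        simp only [LinearMap.comp_apply, Algebra.linearMap_apply, map_one,
          LinearMap.mulRight_apply, one_mul, TensorProduct.mk_apply]
  -- direction ⇒ auxiliary
  have hC₁_one : ∀ x : M ⊗[k] (H ⊗[k] V),
      C₁ (x ⊗ₜ (1 : H)) = (TensorProduct.assoc k M H V).symm x := by
    intro x
    induction x using TensorProduct.induction_on with
    | zero => simp only [TensorProduct.zero_tmul, map_zero]
    | add x₁ x₂ ih₁ ih₂ => rw [TensorProduct.add_tmul, map_add, ih₁, ih₂, map_add]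
    | tmul m y =>
      induction y using TensorProduct.induction_on with
      | zero => simp only [TensorProduct.tmul_zero, TensorProduct.zero_tmul, map_zero]
      | add y₁ y₂ ih₁ ih₂ =>
        rw [TensorProduct.tmul_add, TensorProduct.add_tmul, map_add, ih₁, ih₂, map_add]
      | tmul a w =>
        rw [hC₁_pure, mul_one]
        simp only [TensorProduct.assoc_symm_tmul]
  have hWW : ∀ ξ : M ⊗[k] V, W (ξ ⊗ₜ (1 : H)) =
      (TensorProduct.assoc k M H V).symm ((LinearMap.lTensor M lamV) ξ) := by
    intro ξ
    rw [hW, LinearMap.comp_apply, LinearMap.rTensor_tmul, hC₁_one]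
  -- finish
  ext ξ
  simp only [Set.mem_setOf_eq]
  constructor
  · intro h
    calc (LinearMap.rTensor V ρM) ξ = W (G' ((LinearMap.rTensor V ρM) ξ)) := (hYY _).symm
      _ = W (δ ξ) := by rw [hδ ξ]
      _ = W (ξ ⊗ₜ (1 : H)) := by rw [h]
      _ = (TensorProduct.assoc k M H V).symm ((LinearMap.lTensor M lamV) ξ) := hWW ξ
  · intro h
    calc δ ξ = G' ((LinearMap.rTensor V ρM) ξ) := hδ ξ
      _ = G' ((TensorProduct.assoc k M H V).symm ((LinearMap.lTensor M lamV) ξ)) := by rw [h]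
      _ = ξ ⊗ₜ (1 : H) := hCC ξ
end

section
/- Let k be a field, H and H' Hopf algebras over k with the antipode S of H bijective, χ : H → H' a bialgebra homomorphism, and A' a right H'-comodule algebra with coaction ρ_{A'}(a') = a'₍₀₎ ⊗ a'₍₁₎. Equip H ⊗ A' with the right H'-coaction (h ⊗ a') ↦ (h₍₁₎ ⊗ a'₍₀₎) ⊗ χ(h₍₂₎) a'₍₁₎, and let (H ⊗ A')^{co H'} denote its coinvariants. Then the map ∑ h_i ⊗ a'_i ↦ ∑ a'_i ⊗ S(h_i) takes (H ⊗ A')^{co H'} into the cotensor product A' □^{H'} H and is a bijection from (H ⊗ A')^{co H'} onto A' □^{H'} H, with inverse given by ∑ a'_i ⊗ h_i ↦ ∑ S⁻¹(h_i) ⊗ a'_i. -/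
open TensorProduct LinearMap


open TensorProduct LinearMap Coalgebra HopfAlgebra
set_option synthInstance.maxHeartbeats 1000000
set_option maxHeartbeats 1000000

section Conv
variable {R A B : Type*} [CommSemiring R] [AddCommMonoid A] [Module R A] [Coalgebra R A]
  [Semiring B] [Algebra R B]

noncomputable def conv (f g : A →ₗ[R] B) : A →ₗ[R] B :=
  LinearMap.mul' R B ∘ₗ TensorProduct.map f g ∘ₗ Coalgebra.comul

noncomputable def convOne : A →ₗ[R] B := Algebra.linearMap R B ∘ₗ Coalgebra.counit

lemma conv_repr (f g : A →ₗ[R] B) {a : A} {ι : Type*} (r : Coalgebra.Repr R a ι) :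
    conv f g a = ∑ i ∈ r.index, f (r.left i) * g (r.right i) := by
  simp [conv, ← r.eq, map_sum]

lemma smul_counit_left {a : A} {ι : Type*} (r : Coalgebra.Repr R a ι) :
    ∑ i ∈ r.index, Coalgebra.counit (R := R) (r.left i) • r.right i = a := by
  have h := congrArg (TensorProduct.lid R A) (Coalgebra.sum_counit_tmul_eq r)
  simp only [map_sum, TensorProduct.lid_tmul] at h
  simpa using h

lemma smul_counit_right {a : A} {ι : Type*} (r : Coalgebra.Repr R a ι) :
    ∑ i ∈ r.index, Coalgebra.counit (R := R) (r.right i) • r.left i = a := by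
  have h := congrArg (TensorProduct.rid R A) (Coalgebra.sum_tmul_counit_eq r)
  simp only [map_sum, TensorProduct.rid_tmul] at h
  simpa using h

lemma conv_one_right (f : A →ₗ[R] B) : conv f convOne = f := by
  ext a
  rw [conv_repr f convOne (ℛ R a)]
  calc ∑ i ∈ (ℛ R a).index, f ((ℛ R a).left i) * convOne ((ℛ R a).right i)
      = ∑ i ∈ (ℛ R a).index, f (Coalgebra.counit (R := R) ((ℛ R a).right i) • (ℛ R a).left i) := by
        refine Finset.sum_congr rfl fun i _ => ?_
        simp [_root_.convOne, Algebra.smul_def, Algebra.commutes, map_smul]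
    _ = f a := by rw [← map_sum, smul_counit_right]

lemma conv_one_left (f : A →ₗ[R] B) : conv convOne f = f := by
  ext a
  rw [conv_repr convOne f (ℛ R a)]
  calc ∑ i ∈ (ℛ R a).index, convOne ((ℛ R a).left i) * f ((ℛ R a).right i)
      = ∑ i ∈ (ℛ R a).index, f (Coalgebra.counit (R := R) ((ℛ R a).left i) • (ℛ R a).right i) := by
        refine Finset.sum_congr rfl fun i _ => ?_
        simp [_root_.convOne, Algebra.smul_def, map_smul]
    _ = f a := by rw [← map_sum, smul_counit_left]

lemma conv_assoc (f g h : A →ₗ[R] B) : conv (conv f g) h = conv f (conv g h) := by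
  ext a
  set r := ℛ R a
  have key := Coalgebra.sum_map_tmul_tmul_eq f g h a (repr := r)
    (a₁ := fun i => ℛ R (r.left i)) (a₂ := fun i => ℛ R (r.right i))
  have key2 := congrArg (LinearMap.mul' R B ∘ₗ LinearMap.lTensor B (LinearMap.mul' R B)) key
  simp only [map_sum, LinearMap.coe_comp, Function.comp_apply, LinearMap.lTensor_tmul,
    LinearMap.mul'_apply] at key2
  rw [conv_repr (conv f g) h r, conv_repr f (conv g h) r]
  calc ∑ i ∈ r.index, conv f g (r.left i) * h (r.right i)
      = ∑ i ∈ r.index, ∑ j ∈ (ℛ R (r.left i)).index,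
          f ((ℛ R (r.left i)).left j) * (g ((ℛ R (r.left i)).right j) * h (r.right i)) := by
        refine Finset.sum_congr rfl fun i _ => ?_
        rw [conv_repr f g (ℛ R (r.left i)), Finset.sum_mul]
        exact Finset.sum_congr rfl fun j _ => mul_assoc _ _ _
    _ = ∑ i ∈ r.index, f (r.left i) * conv g h (r.right i) := by
        rw [← key2]
        refine Finset.sum_congr rfl fun i _ => ?_
        rw [conv_repr g h (ℛ R (r.right i)), Finset.mul_sum]

lemma conv_inv_unique {f g g' : A →ₗ[R] B} (h1 : conv f g = _root_.convOne)
    (h2 : conv g' f = _root_.convOne) : g = g' := by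
  have := conv_assoc g' f g
  rw [h2, h1, conv_one_left, conv_one_right] at this
  exact this

end Conv

section Hopf
variable {R A : Type*} [CommSemiring R] [Semiring A] [HopfAlgebra R A]

local notation "S" => HopfAlgebra.antipode (R := R) (A := A)

lemma counit_antipode (h : A) :
    Coalgebra.counit (R := R) (S h) = Coalgebra.counit (R := R) h := by
  set r := ℛ R h
  have e1 := congrArg (Coalgebra.counit (R := R)) (HopfAlgebra.sum_antipode_mul_eq_algebraMap_counit r)
  simp only [map_sum, Bialgebra.counit_mul, Bialgebra.counit_algebraMap] at e1
  have e2 : Coalgebra.counit (R := R) (S h) =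
      ∑ i ∈ r.index, Coalgebra.counit (R := R) (S (r.left i)) *
        Coalgebra.counit (R := R) (r.right i) := by
    conv_lhs => rw [← smul_counit_right r]
    rw [map_sum, map_sum]
    refine Finset.sum_congr rfl fun i _ => ?_
    rw [map_smul, map_smul, smul_eq_mul, mul_comm]
  rw [e2, e1]

theorem comul_antipode :
    (Coalgebra.comul ∘ₗ S : A →ₗ[R] A ⊗[R] A) =
      (TensorProduct.comm R A A).toLinearMap ∘ₗ TensorProduct.map S S ∘ₗ Coalgebra.comul := by
  set α : A →ₗ[R] A ⊗[R] A := (TensorProduct.mk R A A 1) ∘ₗ S with hα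
  set β : A →ₗ[R] A ⊗[R] A := ((TensorProduct.mk R A A).flip 1) ∘ₗ S with hβ
  set γ : A →ₗ[R] A ⊗[R] A := (TensorProduct.mk R A A).flip 1 with hγ
  set δ₀ : A →ₗ[R] A ⊗[R] A := TensorProduct.mk R A A 1 with hδ₀
  have hab : conv α β =
      (TensorProduct.comm R A A).toLinearMap ∘ₗ TensorProduct.map S S ∘ₗ Coalgebra.comul := by
    ext h
    rw [conv_repr α β (ℛ R h)]
    have : TensorProduct.map S S (Coalgebra.comul h) =
        ∑ i ∈ (ℛ R h).index, S ((ℛ R h).left i) ⊗ₜ[R] S ((ℛ R h).right i) := by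
      simp [← (ℛ R h).eq, map_sum]
    simp only [LinearMap.coe_comp, Function.comp_apply, LinearEquiv.coe_coe]
    rw [this, map_sum]
    refine Finset.sum_congr rfl fun i _ => ?_
    simp [hα, hβ, hγ, hδ₀, Algebra.TensorProduct.tmul_mul_tmul]
  have hgd : conv γ δ₀ = (Coalgebra.comul : A →ₗ[R] A ⊗[R] A) := by
    ext h
    rw [conv_repr γ δ₀ (ℛ R h), ← (ℛ R h).eq]
    refine Finset.sum_congr rfl fun i _ => ?_
    simp [hα, hβ, hγ, hδ₀, Algebra.TensorProduct.tmul_mul_tmul]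
  have hbg : conv β γ = (convOne : A →ₗ[R] A ⊗[R] A) := by
    ext h
    rw [conv_repr β γ (ℛ R h)]
    have : ∑ i ∈ (ℛ R h).index, β ((ℛ R h).left i) * γ ((ℛ R h).right i) =
        (∑ i ∈ (ℛ R h).index, S ((ℛ R h).left i) * (ℛ R h).right i) ⊗ₜ[R] 1 := by
      rw [TensorProduct.sum_tmul]
      refine Finset.sum_congr rfl fun i _ => ?_
      simp [hα, hβ, hγ, hδ₀, Algebra.TensorProduct.tmul_mul_tmul]
    rw [this, HopfAlgebra.sum_antipode_mul_eq_algebraMap_counit (ℛ R h)]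
    simp [_root_.convOne, Algebra.TensorProduct.algebraMap_apply]
  have had : conv α δ₀ = (convOne : A →ₗ[R] A ⊗[R] A) := by
    ext h
    rw [conv_repr α δ₀ (ℛ R h)]
    have : ∑ i ∈ (ℛ R h).index, α ((ℛ R h).left i) * δ₀ ((ℛ R h).right i) =
        (1 : A) ⊗ₜ[R] (∑ i ∈ (ℛ R h).index, S ((ℛ R h).left i) * (ℛ R h).right i) := by
      rw [TensorProduct.tmul_sum]
      refine Finset.sum_congr rfl fun i _ => ?_
      simp [hα, hβ, hγ, hδ₀, Algebra.TensorProduct.tmul_mul_tmul]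
    rw [this, HopfAlgebra.sum_antipode_mul_eq_algebraMap_counit (ℛ R h)]
    simp only [_root_.convOne, LinearMap.coe_comp, Function.comp_apply, Algebra.linearMap_apply]
    rw [Algebra.algebraMap_eq_smul_one (A := A), TensorProduct.tmul_smul,
      Algebra.algebraMap_eq_smul_one]
    rfl
  have h1 : conv (Coalgebra.comul : A →ₗ[R] A ⊗[R] A) (Coalgebra.comul ∘ₗ S) = _root_.convOne := by
    ext h
    rw [conv_repr _ _ (ℛ R h)]
    have : ∑ i ∈ (ℛ R h).index,
        Coalgebra.comul ((ℛ R h).left i) * (Coalgebra.comul ∘ₗ S) ((ℛ R h).right i) =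
        Coalgebra.comul (R := R) (∑ i ∈ (ℛ R h).index, (ℛ R h).left i * S ((ℛ R h).right i)) := by
      rw [map_sum]
      refine Finset.sum_congr rfl fun i _ => ?_
      simp [Bialgebra.comul_mul]
    rw [this, HopfAlgebra.sum_mul_antipode_eq_algebraMap_counit (ℛ R h)]
    simp [_root_.convOne]
  have h2 : conv ((TensorProduct.comm R A A).toLinearMap ∘ₗ TensorProduct.map S S ∘ₗ
      Coalgebra.comul) (Coalgebra.comul : A →ₗ[R] A ⊗[R] A) = _root_.convOne := by
    rw [← hab, ← hgd, conv_assoc, ← conv_assoc β γ δ₀, hbg, conv_one_left, had]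
  exact conv_inv_unique h1 h2

lemma comul_antipode_apply (h : A) :
    Coalgebra.comul (R := R) (S h) =
      (TensorProduct.comm R A A) (TensorProduct.map S S (Coalgebra.comul h)) :=
  congrFun (congrArg DFunLike.coe comul_antipode) h

end Hopf

section Sinv
variable {R A : Type*} [CommSemiring R] [Semiring A] [HopfAlgebra R A]

local notation "S" => HopfAlgebra.antipode (R := R) (A := A)

variable (Sinv : A →ₗ[R] A)
  (hS₁ : ∀ h : A, Sinv (HopfAlgebra.antipode (R := R) h) = h)
  (hS₂ : ∀ h : A, HopfAlgebra.antipode (R := R) (Sinv h) = h)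

include hS₂ in
lemma counit_Sinv (x : A) :
    Coalgebra.counit (R := R) (Sinv x) = Coalgebra.counit (R := R) x := by
  conv_rhs => rw [← hS₂ x]
  rw [_root_.counit_antipode]

include hS₁ hS₂ in
lemma comul_Sinv (x : A) :
    Coalgebra.comul (R := R) (Sinv x) =
      TensorProduct.comm R A A (TensorProduct.map Sinv Sinv (Coalgebra.comul x)) := by
  have hid : TensorProduct.map Sinv Sinv ∘ₗ TensorProduct.map S S = LinearMap.id := by
    rw [← TensorProduct.map_comp]
    have h1 : Sinv ∘ₗ S = LinearMap.id := LinearMap.ext hS₁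
    rw [h1, TensorProduct.map_id]
  have hid' : ∀ u : A ⊗[R] A, TensorProduct.map Sinv Sinv (TensorProduct.map S S u) = u :=
    fun u => congrFun (congrArg DFunLike.coe hid) u
  have hcomm2 : ∀ u : A ⊗[R] A,
      TensorProduct.comm R A A (TensorProduct.comm R A A u) = u := by
    intro u
    induction u using TensorProduct.induction_on with
    | zero => simp
    | tmul a b => simp
    | add u v hu hv => simp [map_add, hu, hv]
  have hswap : ∀ u : A ⊗[R] A,
      TensorProduct.map Sinv Sinv (TensorProduct.comm R A A u) =
        TensorProduct.comm R A A (TensorProduct.map Sinv Sinv u) := by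
    intro u
    induction u using TensorProduct.induction_on with
    | zero => simp
    | tmul a b => simp
    | add u v hu hv => simp [map_add, hu, hv]
  have hc : Coalgebra.comul (R := R) x =
      TensorProduct.comm R A A (TensorProduct.map S S (Coalgebra.comul (R := R) (Sinv x))) := by
    conv_lhs => rw [← hS₂ x, comul_antipode_apply]
  rw [hc, hswap, hcomm2, hid']

/-- A representation of `comul (Sinv x)` obtained from one of `comul x`. -/
noncomputable def sinvRepr {x : A} {ι : Type*} (r : Coalgebra.Repr R x ι) : Coalgebra.Repr R (Sinv x) ι where
  index := r.index
  left := fun i => Sinv (r.right i)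
  right := fun i => Sinv (r.left i)
  eq := by
    rw [comul_Sinv Sinv hS₁ hS₂, ← r.eq, map_sum, map_sum]
    simp

include hS₁ hS₂ in
lemma sinv_mul {x : A} {ι : Type*} (r : Coalgebra.Repr R x ι) :
    ∑ i ∈ r.index, Sinv (r.right i) * r.left i =
      algebraMap R A (Coalgebra.counit (R := R) x) := by
  have := HopfAlgebra.sum_mul_antipode_eq_algebraMap_counit (sinvRepr Sinv hS₁ hS₂ r)
  simp only [sinvRepr, hS₂] at this
  rw [this, counit_Sinv Sinv hS₂]

end Sinv

section Keys
variable {R A : Type*} [CommSemiring R] [Semiring A] [HopfAlgebra R A]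
local notation "S" => HopfAlgebra.antipode (R := R) (A := A)

lemma key1 (h : A) :
    ∑ i ∈ (ℛ R h).index, ∑ j ∈ (ℛ R ((ℛ R h).left i)).index,
      (ℛ R ((ℛ R h).left i)).left j ⊗ₜ[R]
        (S ((ℛ R ((ℛ R h).left i)).right j) * (ℛ R h).right i) = h ⊗ₜ[R] (1 : A) := by
  set r := ℛ R h
  have key := Coalgebra.sum_tmul_tmul_eq r (fun i => ℛ R (r.left i)) (fun i => ℛ R (r.right i))
  have key2 := congrArg (LinearMap.lTensor A (LinearMap.mul' R A ∘ₗ LinearMap.rTensor A S)) key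
  simp only [map_sum, LinearMap.lTensor_tmul, LinearMap.coe_comp, Function.comp_apply,
    LinearMap.rTensor_tmul, LinearMap.mul'_apply] at key2
  rw [key2]
  have : ∀ i ∈ r.index, ∑ j ∈ (ℛ R (r.right i)).index,
      r.left i ⊗ₜ[R] (S ((ℛ R (r.right i)).left j) * (ℛ R (r.right i)).right j) =
      Coalgebra.counit (R := R) (r.right i) • (r.left i ⊗ₜ[R] (1 : A)) := by
    intro i _
    rw [← TensorProduct.tmul_sum, HopfAlgebra.sum_antipode_mul_eq_algebraMap_counit (ℛ R (r.right i)),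
      Algebra.algebraMap_eq_smul_one, TensorProduct.tmul_smul]
  rw [Finset.sum_congr rfl this]
  simp only [TensorProduct.smul_tmul']
  rw [← TensorProduct.sum_tmul, smul_counit_right r]

end Keys

section Keys2
variable {R A : Type*} [CommSemiring R] [Semiring A] [HopfAlgebra R A]
variable (Sinv : A →ₗ[R] A)
  (hS₁ : ∀ h : A, Sinv (HopfAlgebra.antipode (R := R) h) = h)
  (hS₂ : ∀ h : A, HopfAlgebra.antipode (R := R) (Sinv h) = h)

include hS₁ hS₂ in
lemma key2 (h : A) :
    ∑ i ∈ (ℛ R h).index, ∑ j ∈ (ℛ R ((ℛ R h).right i)).index,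
      (ℛ R ((ℛ R h).right i)).right j ⊗ₜ[R]
        (Sinv ((ℛ R ((ℛ R h).right i)).left j) * (ℛ R h).left i) = h ⊗ₜ[R] (1 : A) := by
  set r := ℛ R h
  have key := Coalgebra.sum_tmul_tmul_eq r (fun i => ℛ R (r.left i)) (fun i => ℛ R (r.right i))
  have key2 := congrArg ((TensorProduct.comm R A A).toLinearMap ∘ₗ
    LinearMap.rTensor A (LinearMap.mul' R A ∘ₗ LinearMap.rTensor A Sinv ∘ₗ
      (TensorProduct.comm R A A).toLinearMap) ∘ₗ
    (TensorProduct.assoc R A A A).symm.toLinearMap) key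
  simp only [map_sum, LinearMap.coe_comp, Function.comp_apply, LinearEquiv.coe_coe,
    TensorProduct.assoc_symm_tmul, LinearMap.rTensor_tmul, TensorProduct.comm_tmul,
    LinearMap.mul'_apply] at key2
  rw [← key2]
  have : ∀ i ∈ r.index, ∑ j ∈ (ℛ R (r.left i)).index,
      r.right i ⊗ₜ[R] (Sinv ((ℛ R (r.left i)).right j) * (ℛ R (r.left i)).left j) =
      Coalgebra.counit (R := R) (r.left i) • (r.right i ⊗ₜ[R] (1 : A)) := by
    intro i _
    rw [← TensorProduct.tmul_sum, sinv_mul Sinv hS₁ hS₂ (ℛ R (r.left i)),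
      Algebra.algebraMap_eq_smul_one, TensorProduct.tmul_smul]
  rw [Finset.sum_congr rfl this]
  simp only [TensorProduct.smul_tmul']
  rw [← TensorProduct.sum_tmul, smul_counit_left r]

end Keys2


section Phi
variable {k H H' A' : Type*} [CommSemiring k] [Semiring H] [Semiring H']
  [HopfAlgebra k H] [HopfAlgebra k H'] [Semiring A'] [Algebra k A']

local notation "S" => HopfAlgebra.antipode (R := k) (A := H)

noncomputable def auxθ (χl : H →ₗ[k] H') : H →ₗ[k] H ⊗[k] H' :=
  TensorProduct.map (HopfAlgebra.antipode (R := k))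
    (χl ∘ₗ HopfAlgebra.antipode (R := k)) ∘ₗ Coalgebra.comul

noncomputable def auxθ' (χl : H →ₗ[k] H') (Sinv : H →ₗ[k] H) : H →ₗ[k] H ⊗[k] H' :=
  TensorProduct.map Sinv (χl ∘ₗ Sinv) ∘ₗ
    (TensorProduct.comm k H H).toLinearMap ∘ₗ Coalgebra.comul

noncomputable def Phi1 (A' : Type*) [AddCommMonoid A'] [Module k A'] (χl : H →ₗ[k] H') :
    (H ⊗[k] A') ⊗[k] H' →ₗ[k] (A' ⊗[k] H') ⊗[k] H :=
  (TensorProduct.comm k H (A' ⊗[k] H')).toLinearMap ∘ₗ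
  (TensorProduct.assoc k H A' H').toLinearMap ∘ₗ
  LinearMap.lTensor (H ⊗[k] A') (LinearMap.mul' k H') ∘ₗ
  (TensorProduct.tensorTensorTensorComm k H H' A' H').toLinearMap ∘ₗ
  (TensorProduct.assoc k (H ⊗[k] H') A' H').toLinearMap ∘ₗ
  LinearMap.rTensor H' (LinearMap.rTensor A' (auxθ χl))

noncomputable def Phi2 (A' : Type*) [AddCommMonoid A'] [Module k A'] (χl : H →ₗ[k] H')
    (Sinv : H →ₗ[k] H) : (A' ⊗[k] H') ⊗[k] H →ₗ[k] (H ⊗[k] A') ⊗[k] H' :=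
  LinearMap.rTensor H' (TensorProduct.comm k A' H).toLinearMap ∘ₗ
  LinearMap.lTensor (A' ⊗[k] H) (LinearMap.mul' k H' ∘ₗ (TensorProduct.comm k H' H').toLinearMap) ∘ₗ
  (TensorProduct.tensorTensorTensorComm k A' H' H H').toLinearMap ∘ₗ
  LinearMap.lTensor (A' ⊗[k] H') (auxθ' χl Sinv)

lemma auxθ_apply (χl : H →ₗ[k] H') (h : H) :
    auxθ χl h = ∑ i ∈ (ℛ k h).index,
      S ((ℛ k h).left i) ⊗ₜ[k] χl (S ((ℛ k h).right i)) := by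
  unfold auxθ
  simp only [LinearMap.coe_comp, Function.comp_apply]
  rw [← (ℛ k h).eq, map_sum]
  simp

lemma auxθ'_apply (χl : H →ₗ[k] H') (Sinv : H →ₗ[k] H) (h : H) :
    auxθ' χl Sinv h = ∑ i ∈ (ℛ k h).index,
      Sinv ((ℛ k h).right i) ⊗ₜ[k] χl (Sinv ((ℛ k h).left i)) := by
  unfold auxθ'
  simp only [LinearMap.coe_comp, Function.comp_apply, LinearEquiv.coe_coe]
  rw [← (ℛ k h).eq, map_sum, map_sum]
  simp

lemma Phi1_apply (χl : H →ₗ[k] H') (h : H) (b : A') (x : H') :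
    Phi1 A' χl ((h ⊗ₜ[k] b) ⊗ₜ[k] x) = ∑ i ∈ (ℛ k h).index,
      (b ⊗ₜ[k] (χl (S ((ℛ k h).right i)) * x)) ⊗ₜ[k] S ((ℛ k h).left i) := by
  unfold Phi1
  simp only [LinearMap.coe_comp, Function.comp_apply, LinearEquiv.coe_coe,
    LinearMap.rTensor_tmul]
  rw [auxθ_apply, TensorProduct.sum_tmul, TensorProduct.sum_tmul, map_sum, map_sum,
    map_sum, map_sum, map_sum]
  refine Finset.sum_congr rfl fun i _ => ?_
  simp [TensorProduct.tensorTensorTensorComm_tmul]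

lemma Phi2_apply (χl : H →ₗ[k] H') (Sinv : H →ₗ[k] H) (b : A') (x : H') (h : H) :
    Phi2 A' χl Sinv ((b ⊗ₜ[k] x) ⊗ₜ[k] h) = ∑ i ∈ (ℛ k h).index,
      (Sinv ((ℛ k h).right i) ⊗ₜ[k] b) ⊗ₜ[k] (χl (Sinv ((ℛ k h).left i)) * x) := by
  unfold Phi2
  simp only [LinearMap.coe_comp, Function.comp_apply, LinearEquiv.coe_coe,
    LinearMap.lTensor_tmul]
  rw [auxθ'_apply, TensorProduct.tmul_sum, map_sum, map_sum, map_sum]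
  refine Finset.sum_congr rfl fun i _ => ?_
  simp [TensorProduct.tensorTensorTensorComm_tmul]

end Phi

section EIdent
variable {k H H' A' : Type*} [CommSemiring k] [Semiring H] [Semiring H']
  [HopfAlgebra k H] [HopfAlgebra k H'] [Semiring A'] [Algebra k A']

local notation "S" => HopfAlgebra.antipode (R := k) (A := H)

lemma ident_E2 (χl : H →ₗ[k] H') :
    ((TensorProduct.assoc k A' H' H).symm.toLinearMap ∘ₗ
      (LinearMap.lTensor A' ((LinearMap.rTensor H χl) ∘ₗ Coalgebra.comul))) ∘ₗ
      ((TensorProduct.map LinearMap.id (HopfAlgebra.antipode (R := k))) ∘ₗ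
        (TensorProduct.comm k H A').toLinearMap) =
    Phi1 A' χl ∘ₗ (TensorProduct.mk k (H ⊗[k] A') H').flip 1 := by
  apply TensorProduct.ext'
  intro h a
  have hSh : Coalgebra.comul (R := k) (S h) = ∑ i ∈ (ℛ k h).index,
      S ((ℛ k h).right i) ⊗ₜ[k] S ((ℛ k h).left i) := by
    rw [comul_antipode_apply, ← (ℛ k h).eq, map_sum, map_sum]
    simp
  simp only [LinearMap.coe_comp, Function.comp_apply, LinearEquiv.coe_coe,
    TensorProduct.comm_tmul, TensorProduct.map_tmul, LinearMap.id_coe, id_eq,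
    LinearMap.lTensor_tmul, TensorProduct.mk_apply, LinearMap.flip_apply]
  rw [hSh, map_sum, TensorProduct.tmul_sum, map_sum, Phi1_apply]
  refine Finset.sum_congr rfl fun i _ => ?_
  simp [mul_one]

lemma ident_E1 (χl : H →ₗ[k] H') (hχ : ∀ x y : H, χl (x * y) = χl x * χl y)
    (hχ1 : χl 1 = 1) (ρ : A' →ₗ[k] A' ⊗[k] H') :
    (LinearMap.rTensor H ρ) ∘ₗ
      ((TensorProduct.map LinearMap.id (HopfAlgebra.antipode (R := k))) ∘ₗ
        (TensorProduct.comm k H A').toLinearMap) =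
    Phi1 A' χl ∘ₗ ((LinearMap.lTensor (H ⊗[k] A') (LinearMap.mul' k H')) ∘ₗ
      (TensorProduct.tensorTensorTensorComm k H H' A' H').toLinearMap ∘ₗ
      (TensorProduct.map ((LinearMap.lTensor H χl) ∘ₗ Coalgebra.comul) ρ)) := by
  apply TensorProduct.ext'
  intro h a
  simp only [LinearMap.coe_comp, Function.comp_apply, LinearEquiv.coe_coe,
    TensorProduct.comm_tmul, TensorProduct.map_tmul, LinearMap.id_coe, id_eq,
    LinearMap.rTensor_tmul]
  generalize ρ a = w
  induction w using TensorProduct.induction_on with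
  | zero => simp
  | add w1 w2 ih1 ih2 =>
      rw [TensorProduct.tmul_add, map_add, map_add, map_add, TensorProduct.add_tmul, ih1, ih2]
  | tmul b y =>
      have hcl : (LinearMap.lTensor H χl) (Coalgebra.comul (R := k) h) =
          ∑ i ∈ (ℛ k h).index, (ℛ k h).left i ⊗ₜ[k] χl ((ℛ k h).right i) := by
        rw [← (ℛ k h).eq, map_sum]; simp
      rw [hcl, TensorProduct.sum_tmul, map_sum, map_sum, map_sum]
      simp only [TensorProduct.tensorTensorTensorComm_tmul, LinearMap.lTensor_tmul,
        LinearMap.mul'_apply, Phi1_apply]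
      have κ := congrArg (TensorProduct.map (HopfAlgebra.antipode (R := k)) χl) (key1 (R := k) h)
      simp only [map_sum, TensorProduct.map_tmul, hχ, hχ1] at κ
      have κ2 := congrArg ((TensorProduct.comm k H (A' ⊗[k] H')).toLinearMap ∘ₗ
        LinearMap.lTensor H ((TensorProduct.mk k A' H' b) ∘ₗ LinearMap.mulRight k y)) κ
      simp only [map_sum, LinearMap.coe_comp, Function.comp_apply, LinearEquiv.coe_coe,
        LinearMap.lTensor_tmul, LinearMap.mulRight_apply, TensorProduct.mk_apply,
        TensorProduct.comm_tmul, one_mul] at κ2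
      rw [← κ2]
      refine Finset.sum_congr rfl fun i _ => Finset.sum_congr rfl fun j _ => ?_
      rw [mul_assoc]

end EIdent

section EIdent2
variable {k H H' A' : Type*} [CommSemiring k] [Semiring H] [Semiring H']
  [HopfAlgebra k H] [HopfAlgebra k H'] [Semiring A'] [Algebra k A']
variable (Sinv : H →ₗ[k] H)
  (hS₁ : ∀ h : H, Sinv (HopfAlgebra.antipode (R := k) h) = h)
  (hS₂ : ∀ h : H, HopfAlgebra.antipode (R := k) (Sinv h) = h)

include hS₁ hS₂ in
lemma ident_E3 (χl : H →ₗ[k] H') (ρ : A' →ₗ[k] A' ⊗[k] H') :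
    ((LinearMap.lTensor (H ⊗[k] A') (LinearMap.mul' k H')) ∘ₗ
      (TensorProduct.tensorTensorTensorComm k H H' A' H').toLinearMap ∘ₗ
      (TensorProduct.map ((LinearMap.lTensor H χl) ∘ₗ Coalgebra.comul) ρ)) ∘ₗ
      ((TensorProduct.map Sinv LinearMap.id) ∘ₗ (TensorProduct.comm k A' H).toLinearMap) =
    Phi2 A' χl Sinv ∘ₗ LinearMap.rTensor H ρ := by
  apply TensorProduct.ext'
  intro a h
  simp only [LinearMap.coe_comp, Function.comp_apply, LinearEquiv.coe_coe,
    TensorProduct.comm_tmul, TensorProduct.map_tmul, LinearMap.id_coe, id_eq,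
    LinearMap.rTensor_tmul]
  generalize ρ a = w
  induction w using TensorProduct.induction_on with
  | zero => simp
  | add w1 w2 ih1 ih2 =>
      rw [TensorProduct.tmul_add, map_add, map_add, TensorProduct.add_tmul, map_add, ih1, ih2]
  | tmul b y =>
      have hcl : (LinearMap.lTensor H χl) (Coalgebra.comul (R := k) (Sinv h)) =
          ∑ i ∈ (ℛ k h).index,
            Sinv ((ℛ k h).right i) ⊗ₜ[k] χl (Sinv ((ℛ k h).left i)) := by
        rw [comul_Sinv Sinv hS₁ hS₂, ← (ℛ k h).eq, map_sum, map_sum, map_sum]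
        simp
      rw [hcl, TensorProduct.sum_tmul, map_sum, map_sum, Phi2_apply]
      refine Finset.sum_congr rfl fun i _ => ?_
      simp [TensorProduct.tensorTensorTensorComm_tmul]

include hS₁ hS₂ in
lemma ident_E4 (χl : H →ₗ[k] H') (hχ : ∀ x y : H, χl (x * y) = χl x * χl y)
    (hχ1 : χl 1 = 1) :
    Phi2 A' χl Sinv ∘ₗ ((TensorProduct.assoc k A' H' H).symm.toLinearMap ∘ₗ
      (LinearMap.lTensor A' ((LinearMap.rTensor H χl) ∘ₗ Coalgebra.comul))) =
    (TensorProduct.mk k (H ⊗[k] A') H').flip 1 ∘ₗ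
      ((TensorProduct.map Sinv LinearMap.id) ∘ₗ (TensorProduct.comm k A' H).toLinearMap) := by
  apply TensorProduct.ext'
  intro a h
  have hcl : (LinearMap.rTensor H χl) (Coalgebra.comul (R := k) h) =
      ∑ i ∈ (ℛ k h).index, χl ((ℛ k h).left i) ⊗ₜ[k] (ℛ k h).right i := by
    rw [← (ℛ k h).eq, map_sum]; simp
  simp only [LinearMap.coe_comp, Function.comp_apply, LinearEquiv.coe_coe,
    TensorProduct.comm_tmul, TensorProduct.map_tmul, LinearMap.id_coe, id_eq,
    LinearMap.lTensor_tmul, TensorProduct.mk_apply, LinearMap.flip_apply]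
  rw [hcl, TensorProduct.tmul_sum, map_sum, map_sum]
  simp only [TensorProduct.assoc_symm_tmul, Phi2_apply]
  have κ := congrArg (TensorProduct.map Sinv χl) (key2 Sinv hS₁ hS₂ h)
  simp only [map_sum, TensorProduct.map_tmul, hχ, hχ1] at κ
  have κ2 := congrArg (LinearMap.rTensor H' ((TensorProduct.mk k H A').flip a)) κ
  simp only [map_sum, LinearMap.rTensor_tmul, LinearMap.flip_apply, TensorProduct.mk_apply] at κ2
  exact κ2

end EIdent2

/-- **The isomorphism `(H ⊗ A')^{co H'} ≅ A' □^{H'} H`.**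
Let `χ : H → H'` be a bialgebra homomorphism of Hopf algebras over a field `k`, with the
antipode `S` of `H` bijective (inverse `Sinv`), and `A'` a right `H'`-comodule algebra.
Equip `H ⊗ A'` with the right `H'`-coaction
`h ⊗ a' ↦ (h₍₁₎ ⊗ a'₍₀₎) ⊗ χ(h₍₂₎) a'₍₁₎`.  Then `∑ hᵢ ⊗ a'ᵢ ↦ ∑ a'ᵢ ⊗ S(hᵢ)` takes the
coinvariants `(H ⊗ A')^{co H'}` into the cotensor product `A' □^{H'} H` and is a bijection
onto it, with inverse `∑ a'ᵢ ⊗ hᵢ ↦ ∑ S⁻¹(hᵢ) ⊗ a'ᵢ`. -/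
theorem coinvariants_iso_cotensor
    (k H H' A' : Type*) [Field k] [Ring H] [Ring H'] [HopfAlgebra k H] [HopfAlgebra k H']
    [Ring A'] [Algebra k A']
    (χ : H →ₐc[k] H')
    (Sinv : H →ₗ[k] H)
    (hS₁ : ∀ h : H, Sinv (HopfAlgebra.antipode (R := k) h) = h)
    (hS₂ : ∀ h : H, HopfAlgebra.antipode (R := k) (Sinv h) = h)
    -- `A'` is a right `H'`-comodule algebra
    (ρA' : A' →ₐ[k] A' ⊗[k] H')
    (hρA'_coassoc : (LinearMap.rTensor H' ρA'.toLinearMap) ∘ₗ ρA'.toLinearMap =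
      (TensorProduct.assoc k A' H' H').symm.toLinearMap ∘ₗ
        (LinearMap.lTensor A' Coalgebra.comul) ∘ₗ ρA'.toLinearMap)
    (hρA'_counit : (TensorProduct.rid k A').toLinearMap ∘ₗ
      (LinearMap.lTensor A' Coalgebra.counit) ∘ₗ ρA'.toLinearMap = LinearMap.id) :
    -- the right `H'`-coaction `h ⊗ a' ↦ (h₍₁₎ ⊗ a'₍₀₎) ⊗ χ(h₍₂₎) a'₍₁₎` on `H ⊗ A'`
    let δ : H ⊗[k] A' →ₗ[k] (H ⊗[k] A') ⊗[k] H' :=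
      (LinearMap.lTensor (H ⊗[k] A') (LinearMap.mul' k H')) ∘ₗ
        (TensorProduct.tensorTensorTensorComm k H H' A' H').toLinearMap ∘ₗ
        (TensorProduct.map
          ((LinearMap.lTensor H (χ : H →ₗ[k] H')) ∘ₗ Coalgebra.comul) ρA'.toLinearMap)
    -- the coinvariants `(H ⊗ A')^{co H'}`
    let coinv : Set (H ⊗[k] A') := {ξ | δ ξ = ξ ⊗ₜ[k] (1 : H')}
    -- the cotensor product `A' □^{H'} H ⊆ A' ⊗ H`
    let cot : Set (A' ⊗[k] H) := {η | (LinearMap.rTensor H ρA'.toLinearMap) η =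
      ((TensorProduct.assoc k A' H' H).symm.toLinearMap ∘ₗ
        (LinearMap.lTensor A'
          ((LinearMap.rTensor H (χ : H →ₗ[k] H')) ∘ₗ Coalgebra.comul))) η}
    -- the map `∑ hᵢ ⊗ a'ᵢ ↦ ∑ a'ᵢ ⊗ S(hᵢ)`
    let Ψ : H ⊗[k] A' →ₗ[k] A' ⊗[k] H :=
      (TensorProduct.map LinearMap.id (HopfAlgebra.antipode (R := k))) ∘ₗ
        (TensorProduct.comm k H A').toLinearMap
    -- the map `∑ a'ᵢ ⊗ hᵢ ↦ ∑ S⁻¹(hᵢ) ⊗ a'ᵢ`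
    let Ψ' : A' ⊗[k] H →ₗ[k] H ⊗[k] A' :=
      (TensorProduct.map Sinv LinearMap.id) ∘ₗ (TensorProduct.comm k A' H).toLinearMap
    (∀ ξ ∈ coinv, Ψ ξ ∈ cot) ∧ Set.BijOn Ψ coinv cot ∧
      (∀ ξ ∈ coinv, Ψ' (Ψ ξ) = ξ) ∧ (∀ η ∈ cot, Ψ (Ψ' η) = η) ∧
      (∀ η ∈ cot, Ψ' η ∈ coinv) := by
  intro δ coinv cot Ψ Ψ'
  have hχm : ∀ x y : H, (χ : H →ₗ[k] H') (x * y) =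
      (χ : H →ₗ[k] H') x * (χ : H →ₗ[k] H') y := by
    intro x y
    simp [BialgHom.coe_toLinearMap, map_mul]
  have hχ1 : (χ : H →ₗ[k] H') 1 = 1 := by
    simp [BialgHom.coe_toLinearMap, map_one]
  -- the global inverse identities
  have hinv1 : ∀ ξ : H ⊗[k] A', Ψ' (Ψ ξ) = ξ := by
    have : Ψ' ∘ₗ Ψ = LinearMap.id := by
      apply TensorProduct.ext'
      intro h a
      simp [Ψ, Ψ', hS₁]
    exact fun ξ => LinearMap.congr_fun this ξ
  have hinv2 : ∀ η : A' ⊗[k] H, Ψ (Ψ' η) = η := by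
    have : Ψ ∘ₗ Ψ' = LinearMap.id := by
      apply TensorProduct.ext'
      intro a h
      simp [Ψ, Ψ', hS₂]
    exact fun η => LinearMap.congr_fun this η
  -- transfer identities
  have E1 := ident_E1 (A' := A') (χ : H →ₗ[k] H') hχm hχ1 ρA'.toLinearMap
  have E2 := ident_E2 (A' := A') (H := H) (χ : H →ₗ[k] H')
  have E3 := ident_E3 (A' := A') Sinv hS₁ hS₂ (χ : H →ₗ[k] H') ρA'.toLinearMap
  have E4 := ident_E4 (A' := A') Sinv hS₁ hS₂ (χ : H →ₗ[k] H') hχm hχ1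
  have maps1 : ∀ ξ ∈ coinv, Ψ ξ ∈ cot := by
    intro ξ hξ
    have hξ' : δ ξ = ξ ⊗ₜ[k] (1 : H') := hξ
    show (LinearMap.rTensor H ρA'.toLinearMap) (Ψ ξ) =
      ((TensorProduct.assoc k A' H' H).symm.toLinearMap ∘ₗ
        (LinearMap.lTensor A'
          ((LinearMap.rTensor H (χ : H →ₗ[k] H')) ∘ₗ Coalgebra.comul))) (Ψ ξ)
    have l1 := LinearMap.congr_fun E1 ξ
    have l2 := LinearMap.congr_fun E2 ξ
    simp only [LinearMap.coe_comp, Function.comp_apply] at l1 l2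
    rw [show (LinearMap.rTensor H ρA'.toLinearMap) (Ψ ξ) = Phi1 A' (χ : H →ₗ[k] H') (δ ξ) from l1,
      hξ']
    exact l2.symm
  have maps2 : ∀ η ∈ cot, Ψ' η ∈ coinv := by
    intro η hη
    have hη' : (LinearMap.rTensor H ρA'.toLinearMap) η =
      ((TensorProduct.assoc k A' H' H).symm.toLinearMap ∘ₗ
        (LinearMap.lTensor A'
          ((LinearMap.rTensor H (χ : H →ₗ[k] H')) ∘ₗ Coalgebra.comul))) η := hη
    show δ (Ψ' η) = (Ψ' η) ⊗ₜ[k] (1 : H')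
    have l3 := LinearMap.congr_fun E3 η
    have l4 := LinearMap.congr_fun E4 η
    simp only [LinearMap.coe_comp, Function.comp_apply] at l3 l4
    have : δ (Ψ' η) = Phi2 A' (χ : H →ₗ[k] H') Sinv ((LinearMap.rTensor H ρA'.toLinearMap) η) :=
      l3
    rw [this, hη']
    exact l4
  refine ⟨maps1, ⟨maps1, ?_, ?_⟩, fun ξ _ => hinv1 ξ, fun η _ => hinv2 η, maps2⟩
  · intro ξ₁ _ ξ₂ _ hee
    rw [← hinv1 ξ₁, hee, hinv1 ξ₂]
  · intro η hη
    exact ⟨Ψ' η, maps2 η hη, hinv2 η⟩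
end
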